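/- arXiv:2205.04745 — 6 statements merged into one kernel-verified Lean document; each statement's English description precedes it below -/
import Mathlib

section
/- For all integers c ≥ 2 and n ≥ 1, the binomial coefficient satisfies C(c·n, n) < √(c / ((c−1)·2·π·n)) · (c^c / (c−1)^(c−1))^n · exp(−1/(12·n+1)). -/
set_option maxHeartbeats 1000000

open Real

section RobbinsAux

open Real Stirling Filter Nat Finset Topology

lemma pow3_ge (k : ℕ) : (2*k+3 : ℕ) ≤ 3^(k+1) := by
  induction k with
  | zero => norm_num
  | succ n ih => rw [pow_succ]; omega

lemma diff_lower (m : ℕ) :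
    1 / (12 * ((m:ℝ)+1) + 1) - 1 / (12 * ((m:ℝ)+2) + 1) <
      Real.log (stirlingSeq (m+1)) - Real.log (stirlingSeq (m+2)) := by
  set x : ℝ := ((1 : ℝ) / (2 * ↑(m + 1) + 1)) ^ 2 with hxdef
  have hm0 : (0:ℝ) ≤ (m:ℝ) := Nat.cast_nonneg m
  have hx0 : 0 ≤ x := sq_nonneg _
  have hxval : x = (1 / (2*(m:ℝ)+3))^2 := by push_cast [hxdef]; ring_nf
  have hx9 : x ≤ 1/9 := by
    rw [hxval, div_pow, one_pow, div_le_div_iff₀ (by positivity) (by norm_num)]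
    nlinarith
  have hx31 : x/3 < 1 := by linarith
  have g : HasSum (fun k : ℕ => (x/3) ^ (k+1)) ((x/3) / (1 - x/3)) := by
    have := (hasSum_geometric_of_lt_one (by positivity) hx31).mul_left (x/3)
    simpa [← _root_.pow_succ', div_eq_mul_inv] using this
  have hle : ∀ k : ℕ, (x/3) ^ (k+1) ≤ (1 : ℝ) / (2 * ↑(k + 1) + 1) * x ^ (k+1) := by
    intro k
    have h3 : (2*(k:ℝ)+3 : ℝ) ≤ 3^(k+1) := by exact_mod_cast pow3_ge k
    calc (x/3)^(k+1) = x^(k+1) * (1/3^(k+1)) := by rw [div_pow]; ring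
      _ ≤ x^(k+1) * (1/(2*(k:ℝ)+3)) := by
          gcongr
      _ = 1/(2*↑(k+1)+1) * x^(k+1) := by push_cast; ring
  have hsum := log_stirlingSeq_diff_hasSum m
  have hges : (x/3) / (1 - x/3) ≤ log (stirlingSeq (m+1)) - log (stirlingSeq (m+2)) := by
    refine hasSum_le (fun k => ?_) g hsum
    simpa [hxdef] using hle k
  refine lt_of_lt_of_le ?_ hges
  have h23 : (0:ℝ) < 2*(m:ℝ)+3 := by positivity
  have h2 : (0:ℝ) < 1 - x/3 := by linarith
  have e1 : x/3/(1-x/3) = 1/(12*(m:ℝ)^2+36*(m:ℝ)+26) := by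
    have hq : (0:ℝ) < 12*(m:ℝ)^2+36*m+26 := by positivity
    rw [div_eq_div_iff h2.ne' hq.ne', hxval]
    field_simp
    ring
  have e2 : 1 / (12 * ((m:ℝ)+1) + 1) - 1 / (12 * ((m:ℝ)+2) + 1)
      = 12/((12*(m:ℝ)+13)*(12*(m:ℝ)+25)) := by field_simp; ring
  rw [e1, e2, div_lt_div_iff₀ (by positivity) (by positivity)]
  nlinarith

lemma diff_upper (m : ℕ) :
    Real.log (stirlingSeq (m+1)) - Real.log (stirlingSeq (m+2)) ≤
      1 / (12 * ((m:ℝ)+1)) - 1 / (12 * ((m:ℝ)+2)) := by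
  set x : ℝ := ((1 : ℝ) / (2 * ↑(m + 1) + 1)) ^ 2 with hxdef
  have hm0 : (0:ℝ) ≤ (m:ℝ) := Nat.cast_nonneg m
  have hx0 : 0 ≤ x := sq_nonneg _
  have hxval : x = (1 / (2*(m:ℝ)+3))^2 := by push_cast [hxdef]; ring_nf
  have hx9 : x ≤ 1/9 := by
    rw [hxval, div_pow, one_pow, div_le_div_iff₀ (by positivity) (by norm_num)]
    nlinarith
  have hx1 : x < 1 := by linarith
  have g : HasSum (fun k : ℕ => (1/3 : ℝ) * x ^ (k+1)) ((1/3) * (x / (1 - x))) := by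
    have := ((hasSum_geometric_of_lt_one hx0 hx1).mul_left x).mul_left (1/3 : ℝ)
    simpa [← _root_.pow_succ', div_eq_mul_inv] using this
  have hsum := log_stirlingSeq_diff_hasSum m
  have hles : log (stirlingSeq (m+1)) - log (stirlingSeq (m+2)) ≤ (1/3) * (x/(1-x)) := by
    refine hasSum_le (fun k => ?_) hsum g
    have : (1 : ℝ) / (2 * ↑(k + 1) + 1) ≤ 1/3 := by
      rw [div_le_div_iff₀ (by positivity) (by norm_num)]
      push_cast; linarith [Nat.cast_nonneg (α := ℝ) k]
    exact mul_le_mul_of_nonneg_right this (pow_nonneg hx0 _)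
  refine hles.trans (le_of_eq ?_)
  have h23 : (0:ℝ) < 2*(m:ℝ)+3 := by positivity
  have h2 : (0:ℝ) < 1 - x := by linarith
  have e1 : 1/3 * (x/(1-x)) = 1/(12*(m:ℝ)^2+36*(m:ℝ)+24) := by
    have hq : (0:ℝ) < 12*(m:ℝ)^2+36*m+24 := by positivity
    rw [mul_div_assoc']
    rw [div_eq_div_iff (by linarith : (1-x) ≠ 0) hq.ne', hxval]
    field_simp
    ring
  rw [e1]
  field_simp
  ring

noncomputable def uu (m : ℕ) : ℝ := Real.log (stirlingSeq (m+1)) - 1/(12*((m:ℝ)+1)+1)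
noncomputable def vv (m : ℕ) : ℝ := Real.log (stirlingSeq (m+1)) - 1/(12*((m:ℝ)+1))

lemma uu_anti : StrictAnti uu := by
  apply strictAnti_nat_of_succ_lt
  intro m
  have h := diff_lower m
  unfold uu
  push_cast
  ring_nf
  ring_nf at h
  linarith

lemma vv_mono : Monotone vv := by
  apply monotone_nat_of_le_succ
  intro m
  have h := diff_upper m
  unfold vv
  push_cast
  ring_nf
  ring_nf at h
  linarith

lemma log_tendsto : Tendsto (fun m : ℕ => Real.log (stirlingSeq (m+1))) atTop (𝓝 (Real.log (Real.sqrt π))) := by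
  have h := tendsto_stirlingSeq_sqrt_pi
  have h2 : Tendsto (fun m : ℕ => stirlingSeq (m+1)) atTop (𝓝 (Real.sqrt π)) :=
    h.comp (tendsto_add_atTop_nat 1)
  exact ((Real.continuousAt_log (by positivity)).tendsto).comp h2

lemma aux_tendsto_zero (a : ℝ) (ha : 0 ≤ a) :
    Tendsto (fun m : ℕ => 1/(12*((m:ℝ)+1)+a)) atTop (𝓝 0) := by
  apply squeeze_zero' (g := fun m : ℕ => 1/(m:ℝ))
  · apply Eventually.of_forall
    intro m
    have hm : (0:ℝ) ≤ (m:ℝ) := Nat.cast_nonneg m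
    exact div_nonneg one_pos.le (by linarith)
  · filter_upwards [eventually_ge_atTop 1] with m hm
    have h1 : (1:ℝ) ≤ (m:ℝ) := by exact_mod_cast hm
    apply div_le_div_of_nonneg_left one_pos.le (by linarith)
    linarith
  · exact tendsto_one_div_atTop_nhds_zero_nat

lemma uu_tendsto : Tendsto uu atTop (𝓝 (Real.log (Real.sqrt π))) := by
  have h := log_tendsto.sub (aux_tendsto_zero 1 one_pos.le)
  rw [sub_zero] at h
  exact h.congr fun x => by unfold uu; ring

lemma vv_tendsto : Tendsto vv atTop (𝓝 (Real.log (Real.sqrt π))) := by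
  have h0 : Tendsto (fun m : ℕ => 1/(12*((m:ℝ)+1))) atTop (𝓝 0) := by
    have := aux_tendsto_zero 0 le_rfl
    simpa using this
  have h := log_tendsto.sub h0
  rw [sub_zero] at h
  exact h.congr fun x => by unfold vv; ring

lemma log_lower (m : ℕ) :
    Real.log (Real.sqrt π) + 1/(12*((m:ℝ)+1)+1) < Real.log (stirlingSeq (m+1)) := by
  have h1 : Real.log (Real.sqrt π) ≤ uu (m+1) :=
    le_of_tendsto uu_tendsto (eventually_atTop.2 ⟨m+1, fun j hj => uu_anti.antitone hj⟩)
  have h2 : uu (m+1) < uu m := uu_anti (lt_add_one m)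
  unfold uu at h1 h2
  linarith

lemma log_upper (m : ℕ) :
    Real.log (stirlingSeq (m+1)) ≤ Real.log (Real.sqrt π) + 1/(12*((m:ℝ)+1)) := by
  have h1 : vv m ≤ Real.log (Real.sqrt π) :=
    ge_of_tendsto vv_tendsto (eventually_atTop.2 ⟨m, fun j hj => vv_mono hj⟩)
  unfold vv at h1
  linarith

lemma fact_lower (m : ℕ) (hm : 1 ≤ m) :
    Real.sqrt π * Real.sqrt (2*(m:ℝ)) * ((m:ℝ)/Real.exp 1)^m * Real.exp (1/(12*(m:ℝ)+1))
      < (m ! : ℝ) := by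
  obtain ⟨k, rfl⟩ : ∃ k, m = k + 1 := ⟨m - 1, by omega⟩
  have hm1 : (1:ℝ) ≤ ((k:ℝ)+1) := by have := Nat.cast_nonneg (α := ℝ) k; linarith
  have hD : (0:ℝ) < Real.sqrt (2*((k:ℝ)+1)) * (((k:ℝ)+1)/Real.exp 1)^(k+1) := by positivity
  have hpos : 0 < stirlingSeq (k+1) := stirlingSeq'_pos k
  have hprod : (0:ℝ) < Real.sqrt π * Real.exp (1/(12*((k:ℝ)+1)+1)) := by positivity
  have h2 : Real.sqrt π * Real.exp (1/(12*((k:ℝ)+1)+1)) < stirlingSeq (k+1) := by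
    rw [← Real.exp_log hpos, ← Real.exp_log hprod]
    apply Real.exp_lt_exp.2
    rw [Real.log_mul (by positivity) (by positivity), Real.log_exp]
    exact log_lower k
  have hfac : ((k+1)! : ℝ) = stirlingSeq (k+1) * (Real.sqrt (2*((k:ℝ)+1)) * (((k:ℝ)+1)/Real.exp 1)^(k+1)) := by
    rw [stirlingSeq]
    push_cast
    field_simp
  rw [hfac]
  push_cast
  calc √π * √(2 * ((k:ℝ) + 1)) * (((k:ℝ) + 1) / Real.exp 1) ^ (k+1) * Real.exp (1 / (12 * ((k:ℝ) + 1) + 1))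
      = (√π * Real.exp (1/(12*((k:ℝ)+1)+1))) * (√(2*((k:ℝ)+1)) * (((k:ℝ)+1)/Real.exp 1)^(k+1)) := by ring
    _ < stirlingSeq (k+1) * (√(2*((k:ℝ)+1)) * (((k:ℝ)+1)/Real.exp 1)^(k+1)) :=
        mul_lt_mul_of_pos_right h2 hD

lemma fact_upper (m : ℕ) (hm : 1 ≤ m) :
    (m ! : ℝ) ≤ Real.sqrt π * Real.sqrt (2*(m:ℝ)) * ((m:ℝ)/Real.exp 1)^m * Real.exp (1/(12*(m:ℝ))) := by
  obtain ⟨k, rfl⟩ : ∃ k, m = k + 1 := ⟨m - 1, by omega⟩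
  have hm1 : (1:ℝ) ≤ ((k:ℝ)+1) := by have := Nat.cast_nonneg (α := ℝ) k; linarith
  have hD : (0:ℝ) < Real.sqrt (2*((k:ℝ)+1)) * (((k:ℝ)+1)/Real.exp 1)^(k+1) := by positivity
  have hpos : 0 < stirlingSeq (k+1) := stirlingSeq'_pos k
  have hprod : (0:ℝ) < Real.sqrt π * Real.exp (1/(12*((k:ℝ)+1))) := by positivity
  have h2 : stirlingSeq (k+1) ≤ Real.sqrt π * Real.exp (1/(12*((k:ℝ)+1))) := by
    rw [← Real.exp_log hpos, ← Real.exp_log hprod]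
    apply Real.exp_le_exp.2
    rw [Real.log_mul (by positivity) (by positivity), Real.log_exp]
    exact log_upper k
  have hfac : ((k+1)! : ℝ) = stirlingSeq (k+1) * (Real.sqrt (2*((k:ℝ)+1)) * (((k:ℝ)+1)/Real.exp 1)^(k+1)) := by
    rw [stirlingSeq]
    push_cast
    field_simp
  rw [hfac]
  push_cast
  calc stirlingSeq (k+1) * (√(2*((k:ℝ)+1)) * (((k:ℝ)+1)/Real.exp 1)^(k+1))
      ≤ (√π * Real.exp (1/(12*((k:ℝ)+1)))) * (√(2*((k:ℝ)+1)) * (((k:ℝ)+1)/Real.exp 1)^(k+1)) :=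
        mul_le_mul_of_nonneg_right h2 hD.le
    _ = √π * √(2 * ((k:ℝ) + 1)) * (((k:ℝ) + 1) / Real.exp 1) ^ (k+1) * Real.exp (1 / (12 * ((k:ℝ) + 1))) := by ring

lemma hP_aux (d m : ℕ) :
    (((((d:ℝ)+2) * ((m:ℝ)+1))/Real.exp 1)^((d+2)*(m+1))) /
      ((((m:ℝ)+1)/Real.exp 1)^(m+1) * (((((d:ℝ)+1) * ((m:ℝ)+1))/Real.exp 1)^((d+1)*(m+1)))) =
      (((d:ℝ)+2)^(d+2)/(((d:ℝ)+1))^(d+1))^(m+1) := by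
  have hL : (0:ℝ) < (((((d:ℝ)+2) * ((m:ℝ)+1))/Real.exp 1)^((d+2)*(m+1))) /
      ((((m:ℝ)+1)/Real.exp 1)^(m+1) * (((((d:ℝ)+1) * ((m:ℝ)+1))/Real.exp 1)^((d+1)*(m+1)))) := by
    positivity
  have hR : (0:ℝ) < (((d:ℝ)+2)^(d+2)/(((d:ℝ)+1))^(d+1))^(m+1) := by positivity
  rw [← Real.exp_log hL, ← Real.exp_log hR]
  congr 1
  simp (disch := positivity) only [Real.log_div, Real.log_mul, Real.log_pow, Real.log_exp]
  push_cast
  ring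

end RobbinsAux

open Stirling Filter Nat Finset Topology in
/-- Upper Robbins-type bound on the binomial coefficient `C(c·n, n)`:
for integers `c ≥ 2` and `n ≥ 1`,
`C(cn, n) < √(c / ((c−1)·2·π·n)) · (c^c / (c−1)^(c−1))^n · exp(−1/(12n+1))`. -/
theorem binomial_upper_bound (c n : ℕ) (hc : 2 ≤ c) (hn : 1 ≤ n) :
    ((c * n).choose n : ℝ) <
      Real.sqrt ((c : ℝ) / (((c : ℝ) - 1) * 2 * Real.pi * n)) *
        ((c : ℝ) ^ c / ((c : ℝ) - 1) ^ (c - 1)) ^ n *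
        Real.exp (-1 / (12 * n + 1)) := by
  obtain ⟨d, rfl⟩ : ∃ d, c = d + 2 := ⟨c - 2, by omega⟩
  set A := n with hA
  set B := (d + 1) * n with hBdef
  set N := (d + 2) * n with hNdef
  have hNAB : N = A + B := by rw [hNdef, hBdef, hA]; ring
  have hAN : A ≤ N := by omega
  have hB1 : 1 ≤ B := Nat.one_le_iff_ne_zero.mpr (Nat.mul_ne_zero (by omega) (by omega))
  have hN1 : 1 ≤ N := Nat.one_le_iff_ne_zero.mpr (Nat.mul_ne_zero (by omega) (by omega))
  have hNsubA : N - A = B := by omega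
  -- cast positivity
  have hnR : (1:ℝ) ≤ (n:ℝ) := by exact_mod_cast hn
  have hnR0 : (0:ℝ) < (n:ℝ) := by linarith
  have hd0 : (0:ℝ) ≤ (d:ℝ) := Nat.cast_nonneg d
  have he : (0:ℝ) < Real.exp 1 := Real.exp_pos 1
  -- the substituted c values
  have hcR : ((d+2:ℕ):ℝ) = (d:ℝ) + 2 := by push_cast; ring
  have hcm1 : (d + 2 - 1 : ℕ) = d + 1 := by omega
  -- choose as factorial ratio
  have hchoose : ((N.choose A) : ℝ) = (N ! : ℝ) / ((A ! : ℝ) * (B ! : ℝ)) := by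
    rw [Nat.cast_choose ℝ hAN, hNsubA]
  -- abbreviations
  set FA : ℝ := Real.sqrt π * Real.sqrt (2*(A:ℝ)) * ((A:ℝ)/Real.exp 1)^A with hFA
  set FB : ℝ := Real.sqrt π * Real.sqrt (2*(B:ℝ)) * ((B:ℝ)/Real.exp 1)^B with hFB
  set FN : ℝ := Real.sqrt π * Real.sqrt (2*(N:ℝ)) * ((N:ℝ)/Real.exp 1)^N with hFN
  have hBR : ((B:ℕ):ℝ) = ((d:ℝ)+1) * n := by rw [hBdef]; push_cast; ring
  have hNR : ((N:ℕ):ℝ) = ((d:ℝ)+2) * n := by rw [hNdef]; push_cast; ring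
  have hFApos : 0 < FA := by rw [hFA]; positivity
  have hFBpos : 0 < FB := by rw [hFB, hBR]; positivity
  have hFNpos : 0 < FN := by rw [hFN, hNR]; positivity
  have hEA : (0:ℝ) < Real.exp (1/(12*(A:ℝ)+1)) := Real.exp_pos _
  have hEB : (0:ℝ) < Real.exp (1/(12*(B:ℝ)+1)) := Real.exp_pos _
  -- step 1: bound choose by the F-ratio
  have step1 : ((N.choose A) : ℝ) <
      (FN * Real.exp (1/(12*(N:ℝ)))) /
        ((FA * Real.exp (1/(12*(A:ℝ)+1))) * (FB * Real.exp (1/(12*(B:ℝ)+1)))) := by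
    rw [hchoose]
    have hden : (FA * Real.exp (1/(12*(A:ℝ)+1))) * (FB * Real.exp (1/(12*(B:ℝ)+1)))
        < (A ! : ℝ) * (B ! : ℝ) := by
      apply mul_lt_mul'' (fact_lower A hn) (fact_lower B hB1) (by positivity) (by positivity)
    calc (N ! : ℝ) / ((A ! : ℝ) * (B ! : ℝ))
        ≤ (FN * Real.exp (1/(12*(N:ℝ)))) / ((A ! : ℝ) * (B ! : ℝ)) := by
          gcongr
          exact fact_upper N hN1
      _ < _ := by
          apply div_lt_div_of_pos_left (by positivity) (by positivity) hden
  -- step 2: identity and exp bound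
  refine step1.trans_le ?_
  have hsq2A : (0:ℝ) < Real.sqrt (2*(A:ℝ)) := by rw [hA]; positivity
  have hsq2B : (0:ℝ) < Real.sqrt (2*(B:ℝ)) := by rw [hBR]; positivity
  have hsqpi : (0:ℝ) < Real.sqrt π := by positivity
  have hpowA : (0:ℝ) < ((A:ℝ)/Real.exp 1)^A := by rw [hA]; positivity
  have hpowB : (0:ℝ) < ((B:ℝ)/Real.exp 1)^B := by rw [hBR]; positivity
  set EN : ℝ := Real.exp (1/(12*(N:ℝ))) with hEN
  set EA' : ℝ := Real.exp (1/(12*(A:ℝ)+1)) with hEA'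
  set EB' : ℝ := Real.exp (1/(12*(B:ℝ)+1)) with hEB'
  have hsplit : (FN * EN)/((FA*EA')*(FB*EB')) =
      (Real.sqrt π * Real.sqrt (2*(N:ℝ)) / ((Real.sqrt π * Real.sqrt (2*(A:ℝ))) * (Real.sqrt π * Real.sqrt (2*(B:ℝ))))) *
      (((N:ℝ)/Real.exp 1)^N / (((A:ℝ)/Real.exp 1)^A * ((B:ℝ)/Real.exp 1)^B)) *
      (EN / (EA' * EB')) := by
    rw [hFA, hFB, hFN]
    field_simp
  have hS : Real.sqrt π * Real.sqrt (2*(N:ℝ)) / ((Real.sqrt π * Real.sqrt (2*(A:ℝ))) * (Real.sqrt π * Real.sqrt (2*(B:ℝ)))) =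
      Real.sqrt (((d:ℝ)+2) / (((d:ℝ)+1) * 2 * π * (n:ℝ))) := by
    rw [← Real.sqrt_mul pi_pos.le, ← Real.sqrt_mul pi_pos.le, ← Real.sqrt_mul pi_pos.le,
      ← Real.sqrt_mul (by positivity : (0:ℝ) ≤ π * (2*(A:ℝ))), ← Real.sqrt_div (by positivity)]
    congr 1
    rw [hNR, hBR, hA]
    field_simp
  have hP : ((N:ℝ)/Real.exp 1)^N / (((A:ℝ)/Real.exp 1)^A * ((B:ℝ)/Real.exp 1)^B) =
      (((d:ℝ)+2)^(d+2) / (((d:ℝ)+1)^(d+1)))^n := by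
    obtain ⟨m, rfl⟩ : ∃ m, n = m+1 := ⟨n-1, by omega⟩
    have := hP_aux d m
    rw [hNR, hBR, hA, hNdef, hBdef]
    push_cast
    push_cast at this
    exact this
  have hE : EN / (EA' * EB') ≤ Real.exp (-1/(12*(n:ℝ)+1)) := by
    rw [hEN, hEA', hEB', ← Real.exp_add, ← Real.exp_sub]
    apply Real.exp_le_exp.2
    rw [hNR, hBR, hA]
    have hkey : 1/(12*(((d:ℝ)+2)*n)) ≤ 1/(12*(((d:ℝ)+1)*(n:ℝ))+1) := by
      apply one_div_le_one_div_of_le (by positivity)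
      nlinarith
    rw [show (-1:ℝ)/(12*(n:ℝ)+1) = -(1/(12*(n:ℝ)+1)) from by ring]
    linarith [hkey]
  rw [hsplit, hS, hP]
  push_cast [hcm1]
  rw [show ((d:ℝ)+2) - 1 = (d:ℝ)+1 from by ring]
  have hSP : (0:ℝ) ≤ Real.sqrt (((d:ℝ)+2) / (((d:ℝ)+1) * 2 * π * (n:ℝ))) * ((((d:ℝ)+2))^(d+2)/(((d:ℝ)+1))^(d+1))^n := by
    positivity
  exact mul_le_mul_of_nonneg_left hE hSP
end

section
/- For all integers c ≥ 2 and n ≥ 1, the binomial coefficient satisfies C(c·n, n) > √(c / ((c−1)·2·π·n)) · (c^c / (c−1)^(c−1))^n · (1 − (c² − c + 1) / (12·c·(c−1)·n)). -/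
open Real

open Stirling Filter Nat Finset Topology

lemma key_eq (M : ℝ) (hM : 0 ≤ M) :
    (1/3 : ℝ) * ((1/(2*(M+1)+1))^2 * (1 - (1/(2*(M+1)+1))^2)⁻¹) =
      1/(12*(M+1)) - 1/(12*(M+2)) := by
  have h1 : (2*(M+1)+1) ≠ 0 := by positivity
  have h2 : (1 : ℝ) - (1/(2*(M+1)+1))^2 ≠ 0 := by
    rw [div_pow, one_pow, sub_ne_zero]
    intro h
    have := h.symm
    rw [div_eq_one_iff_eq (by positivity)] at this
    nlinarith
  have h3 : (0:ℝ) < 24 + M*36 + M^2*12 := by nlinarith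
  have h4 : (2*(M+1)+1)^2 - (1:ℝ) ≠ 0 := by nlinarith
  field_simp [h2, h4, h3.ne']
  ring

lemma diff_le (m : ℕ) : log (stirlingSeq (m+1)) - log (stirlingSeq (m+2)) ≤
    1/(12*((m:ℝ)+1)) - 1/(12*((m:ℝ)+2)) := by
  set t2 : ℝ := (1 / (2 * ((m:ℕ)+1 : ℕ) + 1 : ℝ))^2 with ht2
  have hm : (0:ℝ) ≤ (m:ℝ) := Nat.cast_nonneg m
  have ht2pos : 0 < t2 := by rw [ht2]; positivity
  have ht2lt : t2 < 1 := by
    rw [ht2]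
    push_cast
    rw [div_pow, one_pow, div_lt_one (by positivity)]
    nlinarith
  have hgeo : HasSum (fun k : ℕ => (1/3 : ℝ) * t2 ^ (k+1)) (1/3 * (t2 * (1 - t2)⁻¹)) := by
    have := (hasSum_geometric_of_lt_one ht2pos.le ht2lt).mul_left ((1/3 : ℝ) * t2)
    simp only [mul_assoc] at this
    rw [show (fun k : ℕ => (1/3 : ℝ) * t2 ^ (k+1)) = fun i => 1 / 3 * (t2 * t2 ^ i) from
      funext fun k => by rw [_root_.pow_succ']]
    exact this
  have hle := hasSum_le (fun k => ?_) (log_stirlingSeq_diff_hasSum m) hgeo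
  · refine hle.trans (le_of_eq ?_)
    have := key_eq (m:ℝ) hm
    rw [ht2]
    push_cast
    exact this
  · show (1 : ℝ) / (2 * ((k:ℕ)+1 : ℕ) + 1) * t2 ^ ((k:ℕ)+1) ≤ 1/3 * t2 ^ (k+1)
    apply mul_le_mul_of_nonneg_right _ (pow_nonneg ht2pos.le _)
    rw [div_le_div_iff₀ (by positivity) (by norm_num)]
    push_cast
    nlinarith [Nat.cast_nonneg (α := ℝ) k]

lemma diff_ge (m : ℕ) : 1/(12*((m:ℝ)+1)+1) - 1/(12*((m:ℝ)+2)+1) ≤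
    log (stirlingSeq (m+1)) - log (stirlingSeq (m+2)) := by
  have hm : (0:ℝ) ≤ (m:ℝ) := Nat.cast_nonneg m
  have h0 := le_hasSum (log_stirlingSeq_diff_hasSum m) 0 (fun j _ => by positivity)
  refine le_trans ?_ h0
  push_cast at h0 ⊢
  rw [pow_one, div_pow, one_pow, mul_one_div, div_div,
    div_sub_div _ _ (by positivity) (by positivity),
    div_le_div_iff₀ (by positivity) (by positivity)]
  nlinarith

lemma tendsto_log_stirling :
    Tendsto (fun m : ℕ => log (stirlingSeq (m+1))) atTop (𝓝 (log (√π))) := by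
  have h2 := tendsto_stirlingSeq_sqrt_pi.comp (tendsto_add_atTop_nat 1)
  exact ((Real.continuousAt_log (by positivity)).tendsto.comp h2)

lemma tendsto_aux (a b : ℝ) (ha : 0 < a) :
    Tendsto (fun m : ℕ => 1/(a*((m:ℝ)+1)+b)) atTop (𝓝 0) := by
  simp only [one_div]
  apply Tendsto.inv_tendsto_atTop
  apply tendsto_atTop_add_const_right
  apply Tendsto.const_mul_atTop ha
  exact tendsto_atTop_add_const_right _ 1 tendsto_natCast_atTop_atTop

lemma log_stirling_upper (m : ℕ) :
    log (stirlingSeq (m+1)) ≤ log (√π) + 1/(12*((m:ℝ)+1)) := by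
  have hmono : Monotone (fun m : ℕ => log (stirlingSeq (m+1)) - 1/(12*((m:ℝ)+1))) := by
    apply monotone_nat_of_le_succ
    intro k
    have h := diff_le k
    rw [show k+1+1 = k+2 from rfl]
    push_cast
    push_cast at h
    ring_nf at h ⊢
    linarith
  have htend : Tendsto (fun m : ℕ => log (stirlingSeq (m+1)) - 1/(12*((m:ℝ)+1)))
      atTop (𝓝 (log (√π))) := by
    have := tendsto_log_stirling.sub (tendsto_aux 12 0 (by norm_num))
    simpa using this
  have := hmono.ge_of_tendsto htend m
  linarith

lemma log_stirling_lower (m : ℕ) :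
    log (√π) + 1/(12*((m:ℝ)+1)+1) ≤ log (stirlingSeq (m+1)) := by
  have hanti : Antitone (fun m : ℕ => log (stirlingSeq (m+1)) - 1/(12*((m:ℝ)+1)+1)) := by
    apply antitone_nat_of_succ_le
    intro k
    have h := diff_ge k
    rw [show k+1+1 = k+2 from rfl]
    push_cast
    push_cast at h
    ring_nf at h ⊢
    linarith
  have htend : Tendsto (fun m : ℕ => log (stirlingSeq (m+1)) - 1/(12*((m:ℝ)+1)+1))
      atTop (𝓝 (log (√π))) := by
    have := tendsto_log_stirling.sub (tendsto_aux 12 1 (by norm_num))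
    simpa using this
  have := hanti.le_of_tendsto htend m
  linarith

lemma stirling_upper' (n : ℕ) (hn : 1 ≤ n) :
    stirlingSeq n ≤ √π * exp (1/(12*(n:ℝ))) := by
  obtain ⟨m, rfl⟩ : ∃ m, n = m+1 := ⟨n-1, by omega⟩
  have h := log_stirling_upper m
  have hπ : (0:ℝ) < √π := Real.sqrt_pos.mpr pi_pos
  push_cast
  calc stirlingSeq (m+1) = exp (log (stirlingSeq (m+1))) :=
        (Real.exp_log (stirlingSeq'_pos m)).symm
    _ ≤ exp (log (√π) + 1/(12*((m:ℝ)+1))) := exp_le_exp.mpr h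
    _ = √π * exp (1/(12*((m:ℝ)+1))) := by rw [Real.exp_add, Real.exp_log hπ]

lemma stirling_lower' (n : ℕ) (hn : 1 ≤ n) :
    √π * exp (1/(12*(n:ℝ)+1)) ≤ stirlingSeq n := by
  obtain ⟨m, rfl⟩ : ∃ m, n = m+1 := ⟨n-1, by omega⟩
  have h := log_stirling_lower m
  have hπ : (0:ℝ) < √π := Real.sqrt_pos.mpr pi_pos
  push_cast
  calc √π * exp (1/(12*((m:ℝ)+1)+1)) = exp (log (√π) + 1/(12*((m:ℝ)+1)+1)) := by
        rw [Real.exp_add, Real.exp_log hπ]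
    _ ≤ exp (log (stirlingSeq (m+1))) := exp_le_exp.mpr h
    _ = stirlingSeq (m+1) := Real.exp_log (stirlingSeq'_pos m)

lemma factorial_eq (n : ℕ) (hn : 1 ≤ n) :
    (n ! : ℝ) = stirlingSeq n * (√(2*(n:ℝ)) * ((n:ℝ)/exp 1)^n) := by
  have hnR : (1:ℝ) ≤ (n:ℝ) := by exact_mod_cast hn
  have hD : (0:ℝ) < √(2*(n:ℝ)) * ((n:ℝ)/exp 1)^n := by
    apply mul_pos (Real.sqrt_pos.mpr (by linarith))
    exact pow_pos (div_pos (by linarith) (exp_pos 1)) n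
  rw [stirlingSeq, div_mul_cancel₀ _ hD.ne']

lemma factorial_upper (n : ℕ) (hn : 1 ≤ n) :
    (n ! : ℝ) ≤ √π * √(2*(n:ℝ)) * ((n:ℝ)/exp 1)^n * exp (1/(12*(n:ℝ))) := by
  have hnR : (1:ℝ) ≤ (n:ℝ) := by exact_mod_cast hn
  have hD : (0:ℝ) < √(2*(n:ℝ)) * ((n:ℝ)/exp 1)^n := by
    apply mul_pos (Real.sqrt_pos.mpr (by linarith))
    exact pow_pos (div_pos (by linarith) (exp_pos 1)) n
  rw [factorial_eq n hn]
  calc stirlingSeq n * (√(2*(n:ℝ)) * ((n:ℝ)/exp 1)^n)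
      ≤ (√π * exp (1/(12*(n:ℝ)))) * (√(2*(n:ℝ)) * ((n:ℝ)/exp 1)^n) :=
        mul_le_mul_of_nonneg_right (stirling_upper' n hn) hD.le
    _ = √π * √(2*(n:ℝ)) * ((n:ℝ)/exp 1)^n * exp (1/(12*(n:ℝ))) := by ring

lemma factorial_lower (n : ℕ) (hn : 1 ≤ n) :
    √π * √(2*(n:ℝ)) * ((n:ℝ)/exp 1)^n * exp (1/(12*(n:ℝ)+1)) ≤ (n ! : ℝ) := by
  have hnR : (1:ℝ) ≤ (n:ℝ) := by exact_mod_cast hn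
  have hD : (0:ℝ) < √(2*(n:ℝ)) * ((n:ℝ)/exp 1)^n := by
    apply mul_pos (Real.sqrt_pos.mpr (by linarith))
    exact pow_pos (div_pos (by linarith) (exp_pos 1)) n
  rw [factorial_eq n hn]
  calc √π * √(2*(n:ℝ)) * ((n:ℝ)/exp 1)^n * exp (1/(12*(n:ℝ)+1))
      = (√π * exp (1/(12*(n:ℝ)+1))) * (√(2*(n:ℝ)) * ((n:ℝ)/exp 1)^n) := by ring
    _ ≤ stirlingSeq n * (√(2*(n:ℝ)) * ((n:ℝ)/exp 1)^n) :=
        mul_le_mul_of_nonneg_right (stirling_lower' n hn) hD.le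

lemma exp_neg_ge (x : ℝ) (h0 : 0 ≤ x) (h1 : x ≤ 1) :
    1 - x + x^2/2 - (2/9)*x^3 ≤ exp (-x) := by
  have hb := Real.exp_bound (x := -x) (by rwa [abs_neg, abs_of_nonneg h0]) (n := 3) (by norm_num)
  rw [abs_neg, abs_of_nonneg h0] at hb
  have h2 := (abs_sub_le_iff.1 hb).2
  have hsum : ∑ m ∈ Finset.range 3, (-x)^m / m.factorial = 1 - x + x^2/2 := by
    simp [Finset.sum_range_succ, Nat.factorial]
    ring
  rw [hsum] at h2
  norm_num [Nat.factorial] at h2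
  linarith

lemma key_exp (K N : ℝ) (hK : 1 ≤ K) (hN : 1 ≤ N) :
    (1 - ((K+1)^2 - (K+1) + 1)/(12*(K+1)*K*N)) * exp (1/(12*N) + 1/(12*(K*N))) <
      exp (1/(12*((K+1)*N)+1)) := by
  have hNpos : (0:ℝ) < N := by linarith
  have hKpos : (0:ℝ) < K := by linarith
  have hMpos : (0:ℝ) < 12*((K+1)*N) := by nlinarith
  obtain ⟨x, hx⟩ : ∃ x, x = 1/(12*N) + 1/(12*(K*N)) - 1/(12*((K+1)*N)+1) := ⟨_, rfl⟩
  have hz : 1/(12*((K+1)*N)+1) < 1/(12*((K+1)*N)) := by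
    apply one_div_lt_one_div_of_lt hMpos; linarith
  have hv'z : 1/(12*((K+1)*N)) ≤ 1/(12*(K*N)) := by
    apply one_div_le_one_div_of_le (by nlinarith); nlinarith
  have hu12 : 1/(12*N) ≤ 1/12 := by
    apply one_div_le_one_div_of_le (by norm_num); nlinarith
  have hv12 : 1/(12*(K*N)) ≤ 1/12 := by
    apply one_div_le_one_div_of_le (by norm_num); nlinarith
  have hw'pos : (0:ℝ) < 1/(12*((K+1)*N)+1) := by positivity
  have hxlb : 1/(12*N) ≤ x := by rw [hx]; linarith
  have hxpos : 0 < x := lt_of_lt_of_le (by positivity) hxlb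
  have hxub : x ≤ 1/6 := by rw [hx]; linarith
  have hzw : 1/(12*((K+1)*N)) - 1/(12*((K+1)*N)+1) ≤ (1/(12*N))^2/4 := by
    rw [div_sub_div _ _ hMpos.ne' (by linarith), div_pow, one_pow, div_div]
    rw [show (1:ℝ)*(12*((K+1)*N)+1) - 12*((K+1)*N)*1 = 1 from by ring]
    apply one_div_le_one_div_of_le (by positivity)
    nlinarith [mul_pos hNpos hNpos, sq_nonneg (K-1)]
  have hy : ((K+1)^2 - (K+1) + 1)/(12*(K+1)*K*N)
      = 1/(12*N) + 1/(12*(K*N)) - 1/(12*((K+1)*N)) := by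
    field_simp
    ring
  have hQ : 1 - ((K+1)^2 - (K+1) + 1)/(12*(K+1)*K*N) < exp (-x) := by
    have he := exp_neg_ge x hxpos.le (by linarith)
    have ht2 : (1/(12*N))^2 ≤ x^2 := by
      nlinarith [mul_nonneg (sub_nonneg.2 hxlb) (by positivity : (0:ℝ) ≤ x + 1/(12*N))]
    have hcube : x^3 ≤ x^2/6 := by
      nlinarith [mul_nonneg (sq_nonneg x) (by linarith : (0:ℝ) ≤ 1/6 - x)]
    have htpos : (0:ℝ) < (1/(12*N))^2 := by positivity
    have h25 : (1/(12*N))^2/4 < 25/54*x^2 := by nlinarith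
    have hmain : 1/(12*((K+1)*N)) - 1/(12*((K+1)*N)+1) < x^2/2 - 2/9*x^3 := by linarith
    rw [hy]
    linarith
  calc (1 - ((K+1)^2 - (K+1) + 1)/(12*(K+1)*K*N)) * exp (1/(12*N) + 1/(12*(K*N)))
      < exp (-x) * exp (1/(12*N) + 1/(12*(K*N))) :=
        mul_lt_mul_of_pos_right hQ (exp_pos _)
    _ = exp (1/(12*((K+1)*N)+1)) := by rw [← Real.exp_add]; congr 1; rw [hx]; ring

lemma middle (k n : ℕ) (hk : 1 ≤ k) (hn : 1 ≤ n) :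
    √(((k:ℝ)+1)/((k:ℝ)*2*π*(n:ℝ))) * ((((k:ℝ)+1)^(k+1)/(k:ℝ)^k)^n) *
      (1 - (((k:ℝ)+1)^2-((k:ℝ)+1)+1)/(12*((k:ℝ)+1)*(k:ℝ)*(n:ℝ))) *
      ((√π * √(2*(n:ℝ)) * ((n:ℝ)/exp 1)^n * exp (1/(12*(n:ℝ)))) *
       (√π * √(2*((k:ℝ)*(n:ℝ))) * (((k:ℝ)*(n:ℝ))/exp 1)^(k*n) * exp (1/(12*((k:ℝ)*(n:ℝ)))))) <
    √π * √(2*(((k:ℝ)+1)*(n:ℝ))) * ((((k:ℝ)+1)*(n:ℝ))/exp 1)^((k+1)*n) *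
      exp (1/(12*(((k:ℝ)+1)*(n:ℝ))+1)) := by
  have hkR : (1:ℝ) ≤ (k:ℝ) := by exact_mod_cast hk
  have hnR : (1:ℝ) ≤ (n:ℝ) := by exact_mod_cast hn
  have hKpos : (0:ℝ) < (k:ℝ) := by linarith
  have hNpos : (0:ℝ) < (n:ℝ) := by linarith
  have hradpos : (0:ℝ) < ((k:ℝ)+1)/((k:ℝ)*2*π*(n:ℝ)) :=
    div_pos (by linarith) (mul_pos (mul_pos (mul_pos hKpos two_pos) pi_pos) hNpos)
  have h2N : (0:ℝ) ≤ 2*(n:ℝ) := by linarith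
  have E1 : √(((k:ℝ)+1)/((k:ℝ)*2*π*(n:ℝ))) * (√π * √(2*(n:ℝ))) * (√π * √(2*((k:ℝ)*(n:ℝ))))
      = √π * √(2*(((k:ℝ)+1)*(n:ℝ))) := by
    calc √(((k:ℝ)+1)/((k:ℝ)*2*π*(n:ℝ))) * (√π * √(2*(n:ℝ))) * (√π * √(2*((k:ℝ)*(n:ℝ))))
        = (√π*√π) * (√(((k:ℝ)+1)/((k:ℝ)*2*π*(n:ℝ))) * (√(2*(n:ℝ))*√(2*((k:ℝ)*(n:ℝ))))) := by
          ring
      _ = π * (√(((k:ℝ)+1)/((k:ℝ)*2*π*(n:ℝ))) * √((2*(n:ℝ))*(2*((k:ℝ)*(n:ℝ))))) := by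
          rw [Real.mul_self_sqrt pi_pos.le, ← Real.sqrt_mul h2N]
      _ = π * √(((k:ℝ)+1)/((k:ℝ)*2*π*(n:ℝ)) * ((2*(n:ℝ))*(2*((k:ℝ)*(n:ℝ))))) := by
          rw [← Real.sqrt_mul hradpos.le]
      _ = √(π^2) * √(((k:ℝ)+1)/((k:ℝ)*2*π*(n:ℝ)) * ((2*(n:ℝ))*(2*((k:ℝ)*(n:ℝ))))) := by
          rw [Real.sqrt_sq pi_pos.le]
      _ = √(π^2 * (((k:ℝ)+1)/((k:ℝ)*2*π*(n:ℝ)) * ((2*(n:ℝ))*(2*((k:ℝ)*(n:ℝ)))))) := by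
          rw [← Real.sqrt_mul (sq_nonneg π)]
      _ = √(π * (2*(((k:ℝ)+1)*(n:ℝ)))) := by
          congr 1
          field_simp
      _ = √π * √(2*(((k:ℝ)+1)*(n:ℝ))) := Real.sqrt_mul pi_pos.le _
  have E2 : ((((k:ℝ)+1)^(k+1)/(k:ℝ)^k)^n) * (((n:ℝ)/exp 1)^n * (((k:ℝ)*(n:ℝ))/exp 1)^(k*n))
      = ((((k:ℝ)+1)*(n:ℝ))/exp 1)^((k+1)*n) := by
    rw [pow_mul, pow_mul, ← mul_pow, ← mul_pow]
    congr 1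
    rw [div_pow ((k:ℝ)*(n:ℝ)), mul_pow (k:ℝ) (n:ℝ), div_pow (((k:ℝ)+1)*(n:ℝ)),
      mul_pow ((k:ℝ)+1) (n:ℝ)]
    field_simp
    ring
  have hE := key_exp (k:ℝ) (n:ℝ) hkR hnR
  have hGpos : (0:ℝ) < (√(((k:ℝ)+1)/((k:ℝ)*2*π*(n:ℝ))) * (√π * √(2*(n:ℝ))) *
      (√π * √(2*((k:ℝ)*(n:ℝ))))) * (((((k:ℝ)+1)^(k+1)/(k:ℝ)^k)^n) *
      (((n:ℝ)/exp 1)^n * (((k:ℝ)*(n:ℝ))/exp 1)^(k*n))) := by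
    apply mul_pos
    · apply mul_pos (mul_pos (Real.sqrt_pos.mpr hradpos)
        (mul_pos (Real.sqrt_pos.mpr pi_pos) (Real.sqrt_pos.mpr (by linarith))))
      exact mul_pos (Real.sqrt_pos.mpr pi_pos) (Real.sqrt_pos.mpr (by nlinarith))
    · apply mul_pos (pow_pos (_root_.div_pos (pow_pos (by linarith) _) (pow_pos hKpos _)) n)
      exact mul_pos (pow_pos (div_pos hNpos (exp_pos 1)) n)
        (pow_pos (_root_.div_pos (by nlinarith) (exp_pos 1)) (k*n))
  calc √(((k:ℝ)+1)/((k:ℝ)*2*π*(n:ℝ))) * ((((k:ℝ)+1)^(k+1)/(k:ℝ)^k)^n) *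
      (1 - (((k:ℝ)+1)^2-((k:ℝ)+1)+1)/(12*((k:ℝ)+1)*(k:ℝ)*(n:ℝ))) *
      ((√π * √(2*(n:ℝ)) * ((n:ℝ)/exp 1)^n * exp (1/(12*(n:ℝ)))) *
       (√π * √(2*((k:ℝ)*(n:ℝ))) * (((k:ℝ)*(n:ℝ))/exp 1)^(k*n) * exp (1/(12*((k:ℝ)*(n:ℝ))))))
      = ((√(((k:ℝ)+1)/((k:ℝ)*2*π*(n:ℝ))) * (√π * √(2*(n:ℝ))) * (√π * √(2*((k:ℝ)*(n:ℝ))))) *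
         (((((k:ℝ)+1)^(k+1)/(k:ℝ)^k)^n) * (((n:ℝ)/exp 1)^n * (((k:ℝ)*(n:ℝ))/exp 1)^(k*n)))) *
        ((1 - (((k:ℝ)+1)^2-((k:ℝ)+1)+1)/(12*((k:ℝ)+1)*(k:ℝ)*(n:ℝ))) *
          exp (1/(12*(n:ℝ)) + 1/(12*((k:ℝ)*(n:ℝ))))) := by
        rw [Real.exp_add]; ring
    _ < ((√(((k:ℝ)+1)/((k:ℝ)*2*π*(n:ℝ))) * (√π * √(2*(n:ℝ))) * (√π * √(2*((k:ℝ)*(n:ℝ))))) *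
         (((((k:ℝ)+1)^(k+1)/(k:ℝ)^k)^n) * (((n:ℝ)/exp 1)^n * (((k:ℝ)*(n:ℝ))/exp 1)^(k*n)))) *
        exp (1/(12*(((k:ℝ)+1)*(n:ℝ))+1)) := by
        exact mul_lt_mul_of_pos_left hE hGpos
    _ = √π * √(2*(((k:ℝ)+1)*(n:ℝ))) * ((((k:ℝ)+1)*(n:ℝ))/exp 1)^((k+1)*n) *
        exp (1/(12*(((k:ℝ)+1)*(n:ℝ))+1)) := by
        rw [E1, E2]


/-- Lower Robbins-type bound on the binomial coefficient `C(c·n, n)`: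
for integers `c ≥ 2` and `n ≥ 1`,
`C(cn, n) > √(c / ((c−1)·2·π·n)) · (c^c / (c−1)^(c−1))^n · (1 − (c²−c+1)/(12·c·(c−1)·n))`. -/
theorem binomial_lower_bound (c n : ℕ) (hc : 2 ≤ c) (hn : 1 ≤ n) :
    Real.sqrt ((c : ℝ) / (((c : ℝ) - 1) * 2 * Real.pi * n)) *
        ((c : ℝ) ^ c / ((c : ℝ) - 1) ^ (c - 1)) ^ n *
        (1 - ((c : ℝ) ^ 2 - c + 1) / (12 * c * ((c : ℝ) - 1) * n)) <
      ((c * n).choose n : ℝ) := by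
  obtain ⟨k, rfl⟩ : ∃ k, c = k + 1 := ⟨c-1, by omega⟩
  have hk : 1 ≤ k := by omega
  have hkR : (1:ℝ) ≤ (k:ℝ) := by exact_mod_cast hk
  have hnR : (1:ℝ) ≤ (n:ℝ) := by exact_mod_cast hn
  have hKpos : (0:ℝ) < (k:ℝ) := by linarith
  have hNpos : (0:ℝ) < (n:ℝ) := by linarith
  have hbn : 1 ≤ k*n := Nat.one_le_iff_ne_zero.mpr (by positivity)
  have hmn : 1 ≤ (k+1)*n := Nat.one_le_iff_ne_zero.mpr (by positivity)
  rw [show k+1-1 = k from rfl, show ((k+1:ℕ):ℝ) = (k:ℝ)+1 from by push_cast; ring,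
    show ((k:ℝ)+1)-1 = (k:ℝ) from by ring]
  -- express choose as ratio of factorials
  have h := Nat.add_choose_mul_factorial_mul_factorial (k*n) n
  rw [show k*n + n = (k+1)*n from by ring] at h
  have hfact : (((k+1)*n).choose n : ℝ) * ((k*n)! : ℝ) * (n ! : ℝ) = (((k+1)*n)! : ℝ) := by
    exact_mod_cast h
  have hABpos : (0:ℝ) < (n ! : ℝ) * ((k*n)! : ℝ) := by positivity
  have hchoose : (((k+1)*n).choose n : ℝ) = (((k+1)*n)! : ℝ) / ((n ! : ℝ) * ((k*n)! : ℝ)) := by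
    rw [eq_div_iff hABpos.ne', ← hfact]; ring
  rw [hchoose, lt_div_iff₀ hABpos]
  -- factorial bounds
  have hUa := factorial_upper n hn
  have hUb := factorial_upper (k*n) hbn
  have hL := factorial_lower ((k+1)*n) hmn
  rw [show ((k*n : ℕ):ℝ) = (k:ℝ)*(n:ℝ) from by push_cast; ring] at hUb
  rw [show (((k+1)*n : ℕ):ℝ) = ((k:ℝ)+1)*(n:ℝ) from by push_cast; ring] at hL
  -- nonnegativity of the target prefactor
  have h1 : (k:ℝ)^2 ≤ (k:ℝ)^2*(n:ℝ) := by nlinarith [sq_nonneg (k:ℝ)]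
  have h2 : (k:ℝ) ≤ (k:ℝ)*(n:ℝ) := by nlinarith
  have hQpos : (0:ℝ) < 1 - (((k:ℝ)+1)^2-((k:ℝ)+1)+1)/(12*((k:ℝ)+1)*(k:ℝ)*(n:ℝ)) := by
    rw [sub_pos, div_lt_one (by nlinarith [mul_pos hKpos hNpos, mul_pos (mul_pos hKpos hKpos) hNpos])]
    nlinarith [h1, h2, sq_nonneg ((k:ℝ)-1)]
  have hTnonneg : (0:ℝ) ≤ √(((k:ℝ)+1)/((k:ℝ)*2*π*(n:ℝ))) * ((((k:ℝ)+1)^(k+1)/(k:ℝ)^k)^n) *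
      (1 - (((k:ℝ)+1)^2-((k:ℝ)+1)+1)/(12*((k:ℝ)+1)*(k:ℝ)*(n:ℝ))) := by
    apply mul_nonneg (mul_nonneg (Real.sqrt_nonneg _) _) hQpos.le
    exact (pow_pos (_root_.div_pos (pow_pos (by linarith) _) (pow_pos hKpos _)) n).le
  have hUapos : (0:ℝ) ≤ √π * √(2*(n:ℝ)) * ((n:ℝ)/exp 1)^n * exp (1/(12*(n:ℝ))) := by
    have : (0:ℝ) ≤ ((n:ℝ)/exp 1)^n := (pow_pos (div_pos hNpos (exp_pos 1)) n).le
    positivity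
  calc √(((k:ℝ)+1)/((k:ℝ)*2*π*(n:ℝ))) * ((((k:ℝ)+1)^(k+1)/(k:ℝ)^k)^n) *
      (1 - (((k:ℝ)+1)^2-((k:ℝ)+1)+1)/(12*((k:ℝ)+1)*(k:ℝ)*(n:ℝ))) * ((n ! : ℝ) * ((k*n)! : ℝ))
      ≤ √(((k:ℝ)+1)/((k:ℝ)*2*π*(n:ℝ))) * ((((k:ℝ)+1)^(k+1)/(k:ℝ)^k)^n) *
        (1 - (((k:ℝ)+1)^2-((k:ℝ)+1)+1)/(12*((k:ℝ)+1)*(k:ℝ)*(n:ℝ))) *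
        ((√π * √(2*(n:ℝ)) * ((n:ℝ)/exp 1)^n * exp (1/(12*(n:ℝ)))) *
         (√π * √(2*((k:ℝ)*(n:ℝ))) * (((k:ℝ)*(n:ℝ))/exp 1)^(k*n) *
           exp (1/(12*((k:ℝ)*(n:ℝ)))))) := by
        apply mul_le_mul_of_nonneg_left _ hTnonneg
        exact mul_le_mul hUa hUb (Nat.cast_nonneg _) hUapos
    _ < √π * √(2*(((k:ℝ)+1)*(n:ℝ))) * ((((k:ℝ)+1)*(n:ℝ))/exp 1)^((k+1)*n) *
        exp (1/(12*(((k:ℝ)+1)*(n:ℝ))+1)) := middle k n hk hn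
    _ ≤ ((((k+1)*n)! : ℕ) : ℝ) := hL
end

section
/- Let B ≥ 1 be an integer, let L be an integrable random variable taking values in the positive integers, and let R be a random variable uniformly distributed on {0, 1, …, B−1} and independent of L. Then E[ ⌊(R + L − 1)/B⌋ + 1 ] = 1 + (E[L] − 1)/B. -/
open MeasureTheory ProbabilityTheory

lemma hermite_sum (B : ℕ) (hB : 1 ≤ B) (m : ℕ) :
    ∑ r ∈ Finset.range B, (r + m) / B = m := by
  induction m with
  | zero =>
    have h : ∀ r ∈ Finset.range B, (r + 0) / B = 0 := fun r hr =>
      Nat.div_eq_of_lt (by simpa using Finset.mem_range.mp hr)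
    rw [Finset.sum_congr rfl h]; simp
  | succ m ih =>
    have h1 : ∑ r ∈ Finset.range (B+1), (r + m)/B
        = (∑ r ∈ Finset.range B, (r + 1 + m)/B) + (0 + m)/B :=
      Finset.sum_range_succ' _ B
    have h2 : ∑ r ∈ Finset.range (B+1), (r + m)/B
        = (∑ r ∈ Finset.range B, (r + m)/B) + (B + m)/B :=
      Finset.sum_range_succ _ B
    have hshift : ∀ r : ℕ, r + (m+1) = r + 1 + m := by omega
    have hBm : (B + m) / B = m / B + 1 := by
      rw [add_comm]; exact Nat.add_div_right m hB
    simp only [hshift]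
    simp only [Nat.zero_add] at h1
    omega

/-- If `L` is an integrable random variable with values in the positive integers
and `R` is uniform on `{0, …, B−1}` and independent of `L`, then
`E[⌊(R + L − 1)/B⌋ + 1] = 1 + (E[L] − 1)/B`. -/
theorem expected_blocks_overlapped
    {Ω : Type*} [MeasurableSpace Ω] (μ : Measure Ω) [IsProbabilityMeasure μ]
    (B : ℕ) (hB : 1 ≤ B) (L R : Ω → ℕ)
    (hLmeas : Measurable L) (hLpos : ∀ ω, 1 ≤ L ω)
    (hLint : Integrable (fun ω => (L ω : ℝ)) μ)
    (hRmeas : Measurable R) (hRlt : ∀ ω, R ω < B)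
    (hRunif : ∀ r, r < B → μ {ω | R ω = r} = ENNReal.ofReal (1 / B))
    (hindep : IndepFun R L μ) :
    ∫ ω, (((R ω + L ω - 1) / B + 1 : ℕ) : ℝ) ∂μ
      = 1 + ((∫ ω, (L ω : ℝ) ∂μ) - 1) / B := by
  have hB0 : (B : ℝ) ≠ 0 := Nat.cast_ne_zero.mpr (by omega)
  set Y : ℕ → Ω → ℝ := fun r ω => (((r + L ω - 1) / B + 1 : ℕ) : ℝ) with hY
  set X : ℕ → Ω → ℝ := fun r ω => if R ω = r then 1 else 0 with hX
  have hYmeas : ∀ r, AEStronglyMeasurable (Y r) μ := fun r =>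
    (((measurable_from_top (f := fun l : ℕ => (((r + l - 1) / B + 1 : ℕ) : ℝ))).comp
      hLmeas)).aestronglyMeasurable
  have hXmeas : ∀ r, AEStronglyMeasurable (X r) μ := fun r =>
    (((measurable_from_top (f := fun n : ℕ => if n = r then (1:ℝ) else 0)).comp
      hRmeas)).aestronglyMeasurable
  have hYint : ∀ r < B, Integrable (Y r) μ := by
    intro r hr
    have hib : Integrable (fun ω => (L ω : ℝ) + B) μ := hLint.add (integrable_const (B:ℝ))
    refine hib.mono (hYmeas r) ?_
    filter_upwards with ω
    have h1 : ((r + L ω - 1) / B + 1 : ℕ) ≤ L ω + B := by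
      have := Nat.div_le_self (r + L ω - 1) B
      have := hLpos ω
      omega
    have h2 : (0:ℝ) ≤ (L ω : ℝ) + B := by positivity
    rw [Real.norm_eq_abs, Real.norm_eq_abs, abs_of_nonneg (Nat.cast_nonneg _),
      abs_of_nonneg h2]
    simp only [hY]
    exact_mod_cast h1
  -- independence of X r and Y r
  have hindep' : ∀ r, IndepFun (X r) (Y r) μ := by
    intro r
    exact hindep.comp (measurable_from_top (f := fun n => if n = r then (1:ℝ) else 0))
      (measurable_from_top (f := fun l => (((r + l - 1) / B + 1 : ℕ) : ℝ)))
  -- pointwise decomposition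
  have hpt : ∀ ω, (((R ω + L ω - 1) / B + 1 : ℕ) : ℝ)
      = ∑ r ∈ Finset.range B, X r ω * Y r ω := by
    intro ω
    have : ∑ r ∈ Finset.range B, X r ω * Y r ω
        = ∑ r ∈ Finset.range B, if R ω = r then Y r ω else 0 := by
      refine Finset.sum_congr rfl fun r _ => ?_
      simp only [hX, ite_mul, one_mul, zero_mul]
    rw [this, Finset.sum_ite_eq (Finset.range B) (R ω) (fun r => Y r ω),
      if_pos (Finset.mem_range.mpr (hRlt ω))]
  -- integral of X r
  have hXint : ∀ r < B, ∫ ω, X r ω ∂μ = 1 / B := by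
    intro r hr
    have hs : MeasurableSet {ω | R ω = r} := hRmeas (measurableSet_singleton r)
    have : X r = Set.indicator {ω | R ω = r} (fun _ => (1:ℝ)) := by
      funext ω
      by_cases h : R ω = r <;> simp [hX, h, Set.indicator, Set.mem_setOf_eq]
    rw [this, integral_indicator hs]
    simp [Measure.real, hRunif r hr, ENNReal.toReal_ofReal (by positivity : (0:ℝ) ≤ 1 / B)]
  -- sum of Y r
  have hsumY : ∀ ω, ∑ r ∈ Finset.range B, Y r ω = (L ω : ℝ) - 1 + B := by
    intro ω
    have h1 : ∀ r, r + L ω - 1 = r + (L ω - 1) := by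
      have := hLpos ω; omega
    have h2 : ∑ r ∈ Finset.range B, ((r + L ω - 1) / B + 1 : ℕ)
        = (L ω - 1) + B := by
      simp only [h1]
      rw [Finset.sum_add_distrib, hermite_sum B hB (L ω - 1)]
      simp
    have h3 : (∑ r ∈ Finset.range B, Y r ω)
        = ((∑ r ∈ Finset.range B, ((r + L ω - 1) / B + 1 : ℕ) : ℕ) : ℝ) := by
      rw [Nat.cast_sum]
    rw [h3, h2]
    have := hLpos ω
    push_cast [Nat.cast_sub this]
    ring
  -- integrability of products
  have hprodint : ∀ r ∈ Finset.range B, Integrable (fun ω => X r ω * Y r ω) μ := by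
    intro r hr
    refine (hYint r (Finset.mem_range.mp hr)).mono
      ((hXmeas r).mul (hYmeas r)) ?_
    filter_upwards with ω
    simp only [hX, norm_mul]
    by_cases h : R ω = r <;> simp [h]
  calc ∫ ω, (((R ω + L ω - 1) / B + 1 : ℕ) : ℝ) ∂μ
      = ∫ ω, ∑ r ∈ Finset.range B, X r ω * Y r ω ∂μ := by
        exact integral_congr_ae (Filter.Eventually.of_forall hpt)
    _ = ∑ r ∈ Finset.range B, ∫ ω, X r ω * Y r ω ∂μ :=
        integral_finset_sum _ hprodint
    _ = ∑ r ∈ Finset.range B, (1 / B : ℝ) * ∫ ω, Y r ω ∂μ := by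
        refine Finset.sum_congr rfl fun r hr => ?_
        rw [(hindep' r).integral_fun_mul_eq_mul_integral (hXmeas r) (hYmeas r),
          hXint r (Finset.mem_range.mp hr)]
    _ = (1 / B : ℝ) * ∑ r ∈ Finset.range B, ∫ ω, Y r ω ∂μ := by
        rw [Finset.mul_sum]
    _ = (1 / B : ℝ) * ∫ ω, ∑ r ∈ Finset.range B, Y r ω ∂μ := by
        rw [integral_finset_sum _ (fun r hr => hYint r (Finset.mem_range.mp hr))]
    _ = (1 / B : ℝ) * ∫ ω, ((L ω : ℝ) - 1 + B) ∂μ := by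
        rw [integral_congr_ae (Filter.Eventually.of_forall fun ω => (hsumY ω))]
    _ = (1 / B : ℝ) * ((∫ ω, (L ω : ℝ) ∂μ) - 1 + B) := by
        have hib : Integrable (fun ω => (L ω : ℝ) - 1) μ := hLint.sub (integrable_const 1)
        rw [integral_add hib (integrable_const (B:ℝ)),
          integral_sub hLint (integrable_const 1)]
        simp
    _ = 1 + ((∫ ω, (L ω : ℝ) ∂μ) - 1) / B := by
        field_simp
        ring
end

section
/- There exists a constant C > 0 such that for every real a ≥ 2, | a·log₂((a²−1)/a²) + log₂((a+1)/(a−1)) − (log₂ e)/a | ≤ C / a³. -/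
open Real

lemma taylor_log_one_sub {t : ℝ} (h : |t| < 1) :
    |t + t ^ 2 / 2 + t ^ 3 / 3 + Real.log (1 - t)| ≤ |t| ^ 4 / (1 - |t|) := by
  have := Real.abs_log_sub_add_sum_range_le h 3
  norm_num [Finset.sum_range_succ, add_assoc] at this
  convert this using 2
  ring

lemma key_bound {x : ℝ} (hx0 : 0 < x) (hx : x ≤ 1/2) :
    |Real.log (1 - x ^ 2) / x + (Real.log (1 + x) - Real.log (1 - x)) - x| ≤ 4 * x ^ 3 := by
  have hxabs : |x| = x := abs_of_pos hx0
  have hxlt : |x| < 1 := by rw [hxabs]; linarith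
  -- bound for log(1-x^2) with n = 1
  have h1 : |x ^ 2 + Real.log (1 - x ^ 2)| ≤ (x ^ 2) ^ 2 / (1 - x ^ 2) := by
    have hx2 : |x ^ 2| < 1 := by
      rw [abs_of_nonneg (sq_nonneg x)]; nlinarith
    have := Real.abs_log_sub_add_sum_range_le hx2 1
    simpa [Finset.sum_range_succ, abs_of_nonneg (sq_nonneg x)] using this
  have h1' : |x ^ 2 + Real.log (1 - x ^ 2)| ≤ (4/3) * x ^ 4 := by
    refine h1.trans ?_
    rw [div_le_iff₀ (by nlinarith)]
    have hx2 : x ^ 2 ≤ 1/4 := by nlinarith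
    nlinarith [pow_nonneg hx0.le 4]
  -- bound for log(1-x)
  have h2 : |x + x ^ 2 / 2 + x ^ 3 / 3 + Real.log (1 - x)| ≤ 2 * x ^ 4 := by
    refine (taylor_log_one_sub hxlt).trans ?_
    rw [hxabs, div_le_iff₀ (by linarith)]
    nlinarith [pow_nonneg hx0.le 4]
  -- bound for log(1+x)
  have h3 : |(-x) + x ^ 2 / 2 + (-x) ^ 3 / 3 + Real.log (1 + x)| ≤ 2 * x ^ 4 := by
    have hxlt' : |(-x)| < 1 := by rwa [abs_neg]
    have := taylor_log_one_sub hxlt'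
    rw [abs_neg, hxabs] at this
    have h14 : ((-x) : ℝ) ^ 2 = x ^ 2 := by ring
    rw [h14] at this
    have : |(-x) + x ^ 2 / 2 + (-x) ^ 3 / 3 + Real.log (1 - -x)| ≤ x ^ 4 / (1 - x) := this
    rw [show (1 : ℝ) - -x = 1 + x by ring] at this
    refine this.trans ?_
    rw [div_le_iff₀ (by linarith)]
    nlinarith [pow_nonneg hx0.le 4]
  -- combine
  have hP : |Real.log (1 - x ^ 2) / x + x| ≤ (4/3) * x ^ 3 := by
    have : Real.log (1 - x ^ 2) / x + x = (x ^ 2 + Real.log (1 - x ^ 2)) / x := by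
      field_simp; ring
    rw [this, abs_div, hxabs, div_le_iff₀ hx0]
    calc |x ^ 2 + Real.log (1 - x ^ 2)| ≤ (4/3) * x ^ 4 := h1'
      _ = 4/3 * x ^ 3 * x := by ring
  set P := Real.log (1 - x ^ 2) / x + x with hPdef
  set Q := (-x) + x ^ 2 / 2 + (-x) ^ 3 / 3 + Real.log (1 + x) with hQdef
  set R := x + x ^ 2 / 2 + x ^ 3 / 3 + Real.log (1 - x) with hRdef
  have hexpr : Real.log (1 - x ^ 2) / x + (Real.log (1 + x) - Real.log (1 - x)) - x
      = P + Q - R + 2/3 * x ^ 3 := by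
    rw [hPdef, hQdef, hRdef]; ring
  rw [hexpr]
  have habs : |P + Q - R + 2/3 * x ^ 3| ≤ |P| + |Q| + |R| + 2/3 * x ^ 3 := by
    have h4 : (0:ℝ) ≤ 2/3 * x ^ 3 := by positivity
    calc |P + Q - R + 2/3 * x ^ 3| ≤ |P + Q - R| + |2/3 * x ^ 3| := abs_add_le _ _
      _ ≤ (|P + Q| + |R|) + |2/3 * x ^ 3| := by gcongr; exact abs_sub _ _
      _ ≤ ((|P| + |Q|) + |R|) + |2/3 * x ^ 3| := by gcongr; exact abs_add_le _ _
      _ = |P| + |Q| + |R| + 2/3 * x ^ 3 := by rw [abs_of_nonneg h4]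
  refine habs.trans ?_
  have hx4 : x ^ 4 ≤ x ^ 3 / 2 := by nlinarith [pow_nonneg hx0.le 3]
  have := hP; have := h2; have := h3
  nlinarith [pow_nonneg hx0.le 3]

/-- There is a constant `C > 0` such that for all real `a ≥ 2`,
`|a·log₂((a²−1)/a²) + log₂((a+1)/(a−1)) − (log₂ e)/a| ≤ C/a³`. -/
theorem space_gap_asymptotics :
    ∃ C : ℝ, 0 < C ∧ ∀ a : ℝ, 2 ≤ a →
      |a * Real.logb 2 ((a ^ 2 - 1) / a ^ 2) + Real.logb 2 ((a + 1) / (a - 1))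
          - Real.logb 2 (Real.exp 1) / a| ≤ C / a ^ 3 := by
  refine ⟨6, by norm_num, fun a ha => ?_⟩
  have ha0 : (0:ℝ) < a := by linarith
  set x : ℝ := a⁻¹ with hxdef
  have hx0 : 0 < x := inv_pos.mpr ha0
  have hx : x ≤ 1/2 := by
    rw [hxdef]
    rw [inv_le_comm₀ (by linarith) (by norm_num)]
    simpa using ha
  have hax : a = x⁻¹ := by rw [hxdef, inv_inv]
  have ha1 : (0:ℝ) < a - 1 := by linarith
  have e1 : (a ^ 2 - 1) / a ^ 2 = 1 - x ^ 2 := by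
    rw [hxdef]; field_simp
  have e2 : (a + 1) / (a - 1) = (1 + x) / (1 - x) := by
    rw [hxdef]
    have h1x : (1:ℝ) - a⁻¹ ≠ 0 := by
      have : a⁻¹ < 1 := by
        rw [inv_lt_one_iff₀]; right; linarith
      linarith
    rw [div_eq_div_iff ha1.ne' h1x]
    field_simp
  have hlog2 : (0:ℝ) < Real.log 2 := Real.log_pos (by norm_num)
  have e3 : Real.log ((1 + x) / (1 - x)) = Real.log (1 + x) - Real.log (1 - x) :=
    Real.log_div (by nlinarith) (by nlinarith)
  have hmain : a * Real.logb 2 ((a ^ 2 - 1) / a ^ 2) + Real.logb 2 ((a + 1) / (a - 1))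
      - Real.logb 2 (Real.exp 1) / a
      = (Real.log (1 - x ^ 2) / x + (Real.log (1 + x) - Real.log (1 - x)) - x) / Real.log 2 := by
    rw [e1, e2]
    simp only [Real.logb, Real.log_exp, e3]
    rw [hax]
    field_simp
  rw [hmain, abs_div, abs_of_pos hlog2, div_le_iff₀ hlog2]
  have hkey := key_bound hx0 hx
  have hlog2' : (2:ℝ)/3 ≤ Real.log 2 := by
    have := Real.log_two_gt_d9; linarith
  have hxa : x ^ 3 = 1 / a ^ 3 := by rw [hxdef]; field_simp
  calc |Real.log (1 - x ^ 2) / x + (Real.log (1 + x) - Real.log (1 - x)) - x|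
      ≤ 4 * x ^ 3 := hkey
    _ = 4 / a ^ 3 := by rw [hxa]; ring
    _ ≤ 6 / a ^ 3 * Real.log 2 := by
        rw [div_mul_eq_mul_div, div_le_div_iff₀ (by positivity) (by positivity)]
        nlinarith [pow_pos ha0 3]
end

section
/- Let S be a finite set of objects, let w : S → ℕ assign to each object a positive integer size, and let N = Σ_{y ∈ S} w(y). Let a, m, B be positive integers and fix x ∈ S. Let (h_y)_{y ∈ S} be independent random variables, each uniformly distributed on the bins {0, 1, …, a·m − 1}, and let R be uniformly distributed on {0, 1, …, B−1} and independent of (h_y). For each bin i let W_i = Σ_{y : h_y = i} w(y), and let s_i = R + Σ_{j < i} W_j be the starting position of bin i. Let X = ⌊(s_{h_x} + W_{h_x} − 1)/B⌋ − ⌊s_{h_x}/B⌋ + 1 be the number of size-B blocks intersected by the bin containing x. Then E[X] ≤ 1 + ( w(x) + N/(a·m) − 1 ) / B. -/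
open MeasureTheory ProbabilityTheory
open scoped ENNReal

/-- Total weight of the objects hashed to bin `i` in outcome `ω`. -/
def binWeight {S : Type*} [Fintype S] {Ω : Type*} (w : S → ℕ) (h : S → Ω → ℕ)
    (i : ℕ) (ω : Ω) : ℕ :=
  ∑ y ∈ Finset.univ.filter (fun y => h y ω = i), w y

/-- Starting position of bin `i` in the contiguous layout of the bins,
shifted by the random cyclic offset `R`. -/
def binStart {S : Type*} [Fintype S] {Ω : Type*} (w : S → ℕ) (h : S → Ω → ℕ)
    (R : Ω → ℕ) (i : ℕ) (ω : Ω) : ℕ :=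
  R ω + ∑ j ∈ Finset.range i, binWeight w h j ω

lemma aux_count (s W B N : ℕ) (hW : 1 ≤ W) (hWN : W ≤ N) :
    (s + W - 1) / B - s / B + 1
      = 1 + ∑ k ∈ Finset.Icc 1 N, (if k < W ∧ B ∣ s + k then 1 else 0) := by
  have h1 : (s + W - 1) / B
      = ((Finset.Ioc 0 (s + W - 1)).filter (fun m => B ∣ m)).card :=
    (Nat.Ioc_filter_dvd_card_eq_div _ _).symm
  have h2 : s / B = ((Finset.Ioc 0 s).filter (fun m => B ∣ m)).card :=
    (Nat.Ioc_filter_dvd_card_eq_div _ _).symm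
  have hsplit : Finset.Ioc 0 s ∪ Finset.Ioc s (s + W - 1) = Finset.Ioc 0 (s + W - 1) :=
    Finset.Ioc_union_Ioc_eq_Ioc (Nat.zero_le s) (by omega)
  have hdisj : Disjoint ((Finset.Ioc 0 s).filter (fun m => B ∣ m))
      ((Finset.Ioc s (s + W - 1)).filter (fun m => B ∣ m)) := by
    apply Finset.disjoint_filter_filter
    rw [Finset.disjoint_left]
    intro a ha hb
    simp only [Finset.mem_Ioc] at ha hb
    omega
  have h3 : (s + W - 1) / B - s / B
      = ((Finset.Ioc s (s + W - 1)).filter (fun m => B ∣ m)).card := by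
    rw [h1, h2, ← hsplit, Finset.filter_union, Finset.card_union_of_disjoint hdisj]
    omega
  rw [h3]
  have h4 : ((Finset.Ioc s (s + W - 1)).filter (fun m => B ∣ m)).card
      = ∑ m ∈ Finset.Ioc s (s + W - 1), (if B ∣ m then 1 else 0) :=
    Finset.card_filter _ _
  have h5 : Finset.Ioc s (s + W - 1) = Finset.Icc (s + 1) (s + (W - 1)) := by
    rw [Finset.Icc_add_one_left_eq_Ioc]; congr 1; omega
  have h6 : ∑ m ∈ Finset.Icc (s + 1) (s + (W - 1)), (if B ∣ m then 1 else 0)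
      = ∑ k ∈ Finset.Icc 1 (W - 1), (if B ∣ s + k then 1 else 0) := by
    rw [← Finset.map_add_left_Icc 1 (W - 1) s, Finset.sum_map]
    rfl
  have h7 : ∑ k ∈ Finset.Icc 1 N, (if k < W ∧ B ∣ s + k then 1 else 0)
      = ∑ k ∈ Finset.Icc 1 (W - 1), (if B ∣ s + k then 1 else 0) := by
    rw [← Finset.sum_filter_add_sum_filter_not (Finset.Icc 1 N) (fun k => k < W)]
    have hA : (Finset.Icc 1 N).filter (fun k => k < W) = Finset.Icc 1 (W - 1) := by
      ext k; simp only [Finset.mem_filter, Finset.mem_Icc]; omega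
    have hrest : ∑ k ∈ (Finset.Icc 1 N).filter (fun k => ¬ k < W),
        (if k < W ∧ B ∣ s + k then 1 else 0) = 0 := by
      apply Finset.sum_eq_zero
      intro k hk
      simp only [Finset.mem_filter] at hk
      simp [hk.2]
    rw [hrest, hA, add_zero]
    apply Finset.sum_congr rfl
    intro k hk
    simp only [Finset.mem_Icc] at hk
    have : k < W := by omega
    simp [this]
  rw [h7, ← h6, ← h5, ← h4]
  omega

lemma aux_unique (B Pk : ℕ) (hB : 0 < B) : ∃! r, r < B ∧ B ∣ Pk + r := by
  have hdvd0 : B ∣ Pk + (B - Pk % B) % B := by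
    rcases Nat.eq_zero_or_pos (Pk % B) with h0 | h0
    · have : (B - Pk % B) % B = 0 := by rw [h0]; simp
      rw [this, Nat.add_zero]; exact Nat.dvd_of_mod_eq_zero h0
    · have hmod : Pk % B < B := Nat.mod_lt _ hB
      have he : (B - Pk % B) % B = B - Pk % B := Nat.mod_eq_of_lt (by omega)
      rw [he]
      have : Pk + (B - Pk % B) = B * (Pk / B) + B := by
        have := Nat.div_add_mod Pk B
        omega
      rw [this]
      exact Dvd.dvd.add (Dvd.intro _ rfl) dvd_rfl
  refine ⟨(B - Pk % B) % B, ⟨Nat.mod_lt _ hB, hdvd0⟩, ?_⟩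
  rintro r ⟨hr, hdvd⟩
  have hr0 : (B - Pk % B) % B < B := Nat.mod_lt _ hB
  rcases le_total r ((B - Pk % B) % B) with hle | hle
  · have h := Nat.dvd_sub hdvd0 hdvd
    have heq : Pk + (B - Pk % B) % B - (Pk + r) = (B - Pk % B) % B - r := by omega
    rw [heq] at h
    rcases Nat.eq_zero_or_pos ((B - Pk % B) % B - r) with h0 | h0
    · omega
    · have := Nat.le_of_dvd h0 h
      omega
  · have h := Nat.dvd_sub hdvd hdvd0
    have heq : Pk + r - (Pk + (B - Pk % B) % B) = r - (B - Pk % B) % B := by omega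
    rw [heq] at h
    rcases Nat.eq_zero_or_pos (r - (B - Pk % B) % B) with h0 | h0
    · omega
    · have := Nat.le_of_dvd h0 h
      omega

lemma aux_sum_ind (Wv N : ℕ) (h1 : 1 ≤ Wv) (hN : Wv ≤ N) :
    ∑ k ∈ Finset.Icc 1 N, (if k < Wv then 1 else 0) = Wv - 1 := by
  rw [← Finset.card_filter]
  have : (Finset.Icc 1 N).filter (fun k => k < Wv) = Finset.Icc 1 (Wv - 1) := by
    ext k; simp only [Finset.mem_filter, Finset.mem_Icc]; omega
  rw [this, Nat.card_Icc]
  omega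

/-- The expected number of size-`B` blocks intersected by the bin containing a
fixed object `x` is at most `1 + (w(x) + N/(a·m) − 1)/B`, where the objects are
hashed independently and uniformly to `a·m` bins, laid out contiguously, and
the layout is shifted by an independent uniform offset `R ∈ {0, …, B−1}`. -/
theorem expected_blocks_per_query
    {Ω : Type*} [MeasurableSpace Ω] (μ : Measure Ω) [IsProbabilityMeasure μ]
    {S : Type*} [Fintype S] (w : S → ℕ) (hw : ∀ y, 1 ≤ w y)
    (N : ℕ) (hN : N = ∑ y, w y)
    (a m B : ℕ) (ha : 0 < a) (hm : 0 < m) (hB : 0 < B) (x : S)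
    (h : S → Ω → ℕ) (hmeas : ∀ y, Measurable (h y))
    (hrange : ∀ y ω, h y ω < a * m)
    (hunif : ∀ y, ∀ i < a * m, μ {ω | h y ω = i} = ENNReal.ofReal (1 / (a * m)))
    (hindep : iIndepFun h μ)
    (R : Ω → ℕ) (hRmeas : Measurable R) (hRlt : ∀ ω, R ω < B)
    (hRunif : ∀ r < B, μ {ω | R ω = r} = ENNReal.ofReal (1 / B))
    (hRindep : IndepFun R (fun ω y => h y ω) μ) :
    ∫ ω, (((binStart w h R (h x ω) ω + binWeight w h (h x ω) ω - 1) / B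
        - binStart w h R (h x ω) ω / B + 1 : ℕ) : ℝ) ∂μ
      ≤ 1 + ((w x : ℝ) + (N : ℝ) / (a * m) - 1) / B := by
  classical
  -- the hash vector and measurability of everything built from it
  set Hv : Ω → (S → ℕ) := fun ω y => h y ω with hHvdef
  have hHv : Measurable Hv := measurable_pi_lambda _ hmeas
  have hTmeas : ∀ T : Set (S → ℕ), MeasurableSet T := fun T =>
    T.to_countable.measurableSet
  -- weight of x's bin and prefix sum, as functions of the hash vector
  set gW : (S → ℕ) → ℕ := fun v => ∑ y ∈ Finset.univ.filter (fun y => v y = v x), w y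
    with hgW
  set gP : (S → ℕ) → ℕ :=
    fun v => ∑ j ∈ Finset.range (v x), ∑ y ∈ Finset.univ.filter (fun y => v y = j), w y
    with hgP
  have hWdef : ∀ ω, binWeight w h (h x ω) ω = gW (Hv ω) := fun ω => rfl
  have hSdef : ∀ ω, binStart w h R (h x ω) ω = R ω + gP (Hv ω) := fun ω => rfl
  have hW1 : ∀ ω, 1 ≤ gW (Hv ω) := by
    intro ω
    have hx : x ∈ Finset.univ.filter (fun y => h y ω = h x ω) := by simp
    calc 1 ≤ w x := hw x
    _ ≤ ∑ y ∈ Finset.univ.filter (fun y => h y ω = h x ω), w y :=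
        Finset.single_le_sum (fun i _ => Nat.zero_le _) hx
  have hWN : ∀ ω, gW (Hv ω) ≤ N := by
    intro ω
    rw [hN]
    exact Finset.sum_le_sum_of_subset (Finset.filter_subset _ _)
  -- the events
  set Aset : ℕ → Set Ω := fun k => {ω | k < gW (Hv ω) ∧ B ∣ R ω + gP (Hv ω) + k}
    with hAset
  set Cset : ℕ → ℕ → Set Ω :=
    fun k r => (fun ω y => h y ω) ⁻¹' {v | k < gW v ∧ B ∣ gP v + r + k} with hCset
  have hCmeas : ∀ k r, MeasurableSet (Cset k r) := fun k r => hHv (hTmeas _)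
  have hAeq : ∀ k, Aset k = ⋃ r ∈ Finset.range B, ({ω | R ω = r} ∩ Cset k r) := by
    intro k
    ext ω
    simp only [hAset, hCset, Set.mem_setOf_eq, Set.mem_iUnion, Set.mem_inter_iff,
      Set.mem_preimage, Finset.mem_range, exists_prop]
    constructor
    · rintro ⟨h1, h2⟩
      exact ⟨R ω, hRlt ω, rfl, h1, by rw [show gP (Hv ω) + R ω + k = R ω + gP (Hv ω) + k by ring]; exact h2⟩
    · rintro ⟨r, _, hRr, h1, h2⟩
      refine ⟨h1, ?_⟩
      rw [hRr, show r + gP (Hv ω) + k = gP (Hv ω) + r + k by ring]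
      exact h2
  have hAmeas : ∀ k, MeasurableSet (Aset k) := by
    intro k
    rw [hAeq k]
    exact Finset.measurableSet_biUnion _ (fun r _ =>
      (hRmeas (measurableSet_singleton r)).inter (hCmeas k r))
  -- Step C: μ (Aset k) = (1/B) * μ {k < W}
  have hC : ∀ k, μ (Aset k) = ENNReal.ofReal (1 / B) * μ {ω | k < gW (Hv ω)} := by
    intro k
    rw [hAeq k]
    rw [measure_biUnion_finset]
    · have hterm : ∀ r ∈ Finset.range B,
          μ ({ω | R ω = r} ∩ Cset k r) = ENNReal.ofReal (1 / B) * μ (Cset k r) := by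
        intro r hr
        rw [Finset.mem_range] at hr
        have hpre : {ω | R ω = r} = R ⁻¹' {r} := by ext ω; simp
        have := (indepFun_iff_measure_inter_preimage_eq_mul.mp hRindep)
          {r} {v | k < gW v ∧ B ∣ gP v + r + k} (measurableSet_singleton r) (hTmeas _)
        rw [hpre, hCset]
        rw [this, ← hpre, hRunif r hr]
      rw [Finset.sum_congr rfl hterm, ← Finset.mul_sum]
      congr 1
      -- ∑ r < B, μ (Cset k r) = μ {k < W}
      have hunion : {ω | k < gW (Hv ω)} = ⋃ r ∈ Finset.range B, Cset k r := by
        ext ω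
        simp only [hCset, Set.mem_setOf_eq, Set.mem_iUnion, Set.mem_preimage,
          Finset.mem_range, exists_prop]
        constructor
        · intro hk
          obtain ⟨r, ⟨hrB, hrd⟩, -⟩ := aux_unique B (gP (Hv ω) + k) hB
          refine ⟨r, hrB, hk, ?_⟩
          rw [show gP (Hv ω) + r + k = gP (Hv ω) + k + r by ring]
          exact hrd
        · rintro ⟨r, _, hk, _⟩
          exact hk
      rw [hunion, measure_biUnion_finset]
      · intro r hr r' hr' hne
        simp only [Finset.coe_range, Set.mem_Iio] at hr hr'
        apply Set.disjoint_left.mpr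
        intro ω hmem hmem'
        simp only [hCset, Set.mem_preimage, Set.mem_setOf_eq] at hmem hmem'
        obtain ⟨r0, -, huniq⟩ := aux_unique B (gP (Hv ω) + k) hB
        have e1 : r = r0 := huniq r ⟨hr,
          by rw [show gP (Hv ω) + k + r = gP (Hv ω) + r + k by ring]; exact hmem.2⟩
        have e2 : r' = r0 := huniq r' ⟨hr',
          by rw [show gP (Hv ω) + k + r' = gP (Hv ω) + r' + k by ring]; exact hmem'.2⟩
        exact hne (e1.trans e2.symm)
      · exact fun r _ => hCmeas k r
    · intro r hr r' hr' hne
      apply Set.disjoint_left.mpr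
      rintro ω ⟨h1, -⟩ ⟨h1', -⟩
      simp only [Set.mem_setOf_eq] at h1 h1'
      exact hne (h1 ▸ h1' ▸ rfl)
    · exact fun r _ => (hRmeas (measurableSet_singleton r)).inter (hCmeas k r)
  -- measurability of {k < W} and {h y = h x}
  have hWset : ∀ k, MeasurableSet {ω | k < gW (Hv ω)} := by
    intro k
    have : {ω | k < gW (Hv ω)} = Hv ⁻¹' {v | k < gW v} := rfl
    rw [this]; exact hHv (hTmeas _)
  have hEqset : ∀ y : S, MeasurableSet {ω | h y ω = h x ω} := by
    intro y
    have : {ω | h y ω = h x ω} = Hv ⁻¹' {v | v y = v x} := rfl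
    rw [this]; exact hHv (hTmeas _)
  -- layer cake: ∑_k μ{k < W} = (w x - 1) + ∑_{y ≠ x} w y * μ{h y = h x}
  have hnat : ∀ ω, (gW (Hv ω) - 1 : ℕ)
      = (w x - 1) + ∑ y ∈ Finset.univ.erase x, (if h y ω = h x ω then w y else 0) := by
    intro ω
    have hWsum : gW (Hv ω)
        = w x + ∑ y ∈ Finset.univ.erase x, (if h y ω = h x ω then w y else 0) := by
      have h1 : gW (Hv ω) = ∑ y : S, (if h y ω = h x ω then w y else 0) := by
        rw [show gW (Hv ω)
            = ∑ y ∈ Finset.univ.filter (fun y => h y ω = h x ω), w y from rfl,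
          Finset.sum_filter]
      rw [h1, ← Finset.add_sum_erase _ _ (Finset.mem_univ x), if_pos rfl]
    have := hw x
    omega
  have hlayer : ∑ k ∈ Finset.Icc 1 N, μ {ω | k < gW (Hv ω)}
      = ((w x - 1 : ℕ) : ℝ≥0∞)
        + ∑ y ∈ Finset.univ.erase x, (w y : ℝ≥0∞) * μ {ω | h y ω = h x ω} := by
    have lhs_eq : ∑ k ∈ Finset.Icc 1 N, μ {ω | k < gW (Hv ω)}
        = ∫⁻ ω, ∑ k ∈ Finset.Icc 1 N,
            ({ω | k < gW (Hv ω)}).indicator (fun _ => (1 : ℝ≥0∞)) ω ∂μ := by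
      rw [lintegral_finset_sum _ (fun k _ => measurable_const.indicator (hWset k))]
      apply Finset.sum_congr rfl
      intro k _
      rw [lintegral_indicator_const (hWset k), one_mul]
    have rhs_eq : ((w x - 1 : ℕ) : ℝ≥0∞)
          + ∑ y ∈ Finset.univ.erase x, (w y : ℝ≥0∞) * μ {ω | h y ω = h x ω}
        = ∫⁻ ω, (((w x - 1 : ℕ) : ℝ≥0∞)
            + ∑ y ∈ Finset.univ.erase x,
              (w y : ℝ≥0∞) * ({ω | h y ω = h x ω}).indicator (fun _ => (1 : ℝ≥0∞)) ω) ∂μ := by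
      rw [lintegral_add_left measurable_const, lintegral_const, measure_univ, mul_one]
      congr 1
      rw [lintegral_finset_sum _ (fun y _ =>
        (measurable_const.indicator (hEqset y)).const_mul _)]
      apply Finset.sum_congr rfl
      intro y _
      rw [lintegral_const_mul _ (measurable_const.indicator (hEqset y)),
        lintegral_indicator_const (hEqset y), one_mul]
    rw [lhs_eq, rhs_eq]
    apply lintegral_congr
    intro ω
    have step1 : ∑ k ∈ Finset.Icc 1 N,
        ({ω | k < gW (Hv ω)}).indicator (fun _ => (1 : ℝ≥0∞)) ω
        = ((gW (Hv ω) - 1 : ℕ) : ℝ≥0∞) := by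
      rw [← aux_sum_ind (gW (Hv ω)) N (hW1 ω) (hWN ω)]
      push_cast
      apply Finset.sum_congr rfl
      intro k _
      by_cases hc : k < gW (Hv ω) <;> simp [Set.indicator_apply, hc]
    rw [step1, hnat ω]
    push_cast
    congr 1
    apply Finset.sum_congr rfl
    intro y _
    by_cases hc : h y ω = h x ω <;> simp [Set.indicator_apply, hc]
  -- pairwise collision probability
  have hpair : ∀ y ∈ Finset.univ.erase x,
      μ {ω | h y ω = h x ω} = ENNReal.ofReal (1 / (a * m)) := by
    intro y hy
    have hne : y ≠ x := Finset.ne_of_mem_erase hy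
    have hunion : {ω | h y ω = h x ω}
        = ⋃ i ∈ Finset.range (a * m), ((h y) ⁻¹' {i} ∩ (h x) ⁻¹' {i}) := by
      ext ω
      simp only [Set.mem_setOf_eq, Set.mem_iUnion, Set.mem_inter_iff, Set.mem_preimage,
        Set.mem_singleton_iff, Finset.mem_range, exists_prop]
      constructor
      · intro he
        exact ⟨h x ω, hrange x ω, he, rfl⟩
      · rintro ⟨i, -, h1, h2⟩
        rw [h1, h2]
    rw [hunion, measure_biUnion_finset]
    · have hterm : ∀ i ∈ Finset.range (a * m),
          μ ((h y) ⁻¹' {i} ∩ (h x) ⁻¹' {i})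
            = ENNReal.ofReal (1 / (a * m)) * ENNReal.ofReal (1 / (a * m)) := by
        intro i hi
        rw [Finset.mem_range] at hi
        have hind := (indepFun_iff_measure_inter_preimage_eq_mul.mp
          (hindep.indepFun hne)) {i} {i} (measurableSet_singleton i) (measurableSet_singleton i)
        rw [hind]
        have hy' : (h y) ⁻¹' {i} = {ω | h y ω = i} := by ext ω; simp
        have hx' : (h x) ⁻¹' {i} = {ω | h x ω = i} := by ext ω; simp
        rw [hy', hx', hunif y i hi, hunif x i hi]
      rw [Finset.sum_congr rfl hterm, Finset.sum_const, Finset.card_range, nsmul_eq_mul]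
      have ham : (0 : ℝ) < (a : ℝ) * (m : ℝ) := by positivity
      rw [← ENNReal.ofReal_mul (by positivity),
        show ((a * m : ℕ) : ℝ≥0∞) = ENNReal.ofReal ((a * m : ℕ) : ℝ) from
          (ENNReal.ofReal_natCast _).symm,
        ← ENNReal.ofReal_mul (by positivity)]
      congr 1
      push_cast
      field_simp
    · intro i hi i' hi' hne'
      apply Set.disjoint_left.mpr
      rintro ω ⟨-, h2⟩ ⟨-, h2'⟩
      simp only [Set.mem_preimage, Set.mem_singleton_iff] at h2 h2'
      exact hne' (h2 ▸ h2' ▸ rfl)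
    · intro i _
      exact ((hmeas y) (measurableSet_singleton i)).inter ((hmeas x) (measurableSet_singleton i))
  -- pointwise rewriting of the integrand
  have hptwise : ∀ ω,
      (((binStart w h R (h x ω) ω + binWeight w h (h x ω) ω - 1) / B
        - binStart w h R (h x ω) ω / B + 1 : ℕ) : ℝ)
      = 1 + ∑ k ∈ Finset.Icc 1 N, (Aset k).indicator (fun _ => (1 : ℝ)) ω := by
    intro ω
    rw [hWdef ω, hSdef ω,
      aux_count (R ω + gP (Hv ω)) (gW (Hv ω)) B N (hW1 ω) (hWN ω)]
    push_cast
    congr 1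
    apply Finset.sum_congr rfl
    intro k _
    by_cases hc : k < gW (Hv ω) ∧ B ∣ R ω + gP (Hv ω) + k <;>
      simp [Set.indicator_apply, hAset, hc]
  -- compute the integral
  have hint : ∀ k ∈ Finset.Icc 1 N,
      Integrable ((Aset k).indicator (fun _ => (1 : ℝ))) μ := by
    intro k _
    rw [integrable_indicator_iff (hAmeas k)]
    exact (integrableOn_const_iff).mpr (Or.inr (measure_lt_top μ _))
  have hI : ∫ ω, (((binStart w h R (h x ω) ω + binWeight w h (h x ω) ω - 1) / B
        - binStart w h R (h x ω) ω / B + 1 : ℕ) : ℝ) ∂μ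
      = 1 + ∑ k ∈ Finset.Icc 1 N, (μ (Aset k)).toReal := by
    rw [integral_congr_ae (Filter.Eventually.of_forall hptwise),
      integral_add (integrable_const 1) (integrable_finset_sum _ hint),
      integral_const, probReal_univ, smul_eq_mul, mul_one,
      integral_finset_sum _ hint]
    congr 1
    apply Finset.sum_congr rfl
    intro k _
    rw [integral_indicator_const (1 : ℝ) (hAmeas k), smul_eq_mul, mul_one, measureReal_def]
  rw [hI]
  -- assemble the ENNReal computation
  have hsum : ∑ k ∈ Finset.Icc 1 N, μ (Aset k)
      = ENNReal.ofReal (1 / B)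
        * (((w x - 1 : ℕ) : ℝ≥0∞) + ((∑ y ∈ Finset.univ.erase x, w y : ℕ) : ℝ≥0∞)
            * ENNReal.ofReal (1 / (a * m))) := by
    rw [Finset.sum_congr rfl (fun k _ => hC k), ← Finset.mul_sum, hlayer,
      Finset.sum_congr rfl (fun y hy => by rw [hpair y hy]), ← Finset.sum_mul]
    congr 2
    push_cast
    ring
  rw [← ENNReal.toReal_sum (fun k _ => measure_ne_top μ _), hsum]
  set T : ℕ := ∑ y ∈ Finset.univ.erase x, w y with hT
  have hTN : (T : ℝ) ≤ (N : ℝ) := by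
    have h1 := Finset.sum_erase_add Finset.univ w (Finset.mem_univ x)
    have h2 : T + w x = N := by rw [hN]; exact h1
    exact_mod_cast Nat.cast_le.mpr (by omega : T ≤ N)
  have hwx1 : ((w x - 1 : ℕ) : ℝ) = (w x : ℝ) - 1 := by
    have := hw x
    push_cast [Nat.cast_sub this]
    ring
  have htoReal : (ENNReal.ofReal (1 / B)
        * (((w x - 1 : ℕ) : ℝ≥0∞) + (T : ℝ≥0∞) * ENNReal.ofReal (1 / (a * m)))).toReal
      = (1 / (B : ℝ)) * (((w x : ℝ) - 1) + (T : ℝ) * (1 / ((a : ℝ) * (m : ℝ)))) := by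
    rw [ENNReal.toReal_mul, ENNReal.toReal_ofReal (by positivity),
      ENNReal.toReal_add (ENNReal.natCast_ne_top _)
        (ENNReal.mul_ne_top (ENNReal.natCast_ne_top _) ENNReal.ofReal_ne_top),
      ENNReal.toReal_natCast, ENNReal.toReal_mul, ENNReal.toReal_natCast,
      ENNReal.toReal_ofReal (by positivity), hwx1]
  rw [htoReal]
  have hrhs : ((w x : ℝ) + (N : ℝ) / (a * m) - 1) / B
      = (1 / (B : ℝ)) * (((w x : ℝ) - 1) + (N : ℝ) * (1 / ((a : ℝ) * (m : ℝ)))) := by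
    field_simp
    ring
  rw [hrhs]
  gcongr
end

section
/- For all integers a ≥ 2 and m ≥ 1, log₂ C(a·m, m) > m · ( (a−1)·log₂(a/(a−1)) + log₂ a ) + (1/2)·log₂( a / ((a−1)·2·π·m) ) + log₂( 1 − (a² − a + 1)/(12·a·(a−1)·m) ), and in particular the factor 1 − (a² − a + 1)/(12·a·(a−1)·m) is strictly positive for all such a and m. -/
open Real

open Finset Filter Topology

lemma log_ratio_bounds {t : ℝ} (h0 : 0 < t) (h3 : t ≤ 1/3) :
    2*t + 2/3*t^3 < Real.log ((1+t)/(1-t)) ∧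
    Real.log ((1+t)/(1-t)) ≤ 2*t + 2*t^3/(3*(1-t^2)) := by
  have ht1 : t < 1 := by linarith
  have habs : |t| < 1 := by rw [abs_of_pos h0]; exact ht1
  have habs' : |(-t)| < 1 := by rw [abs_neg]; exact habs
  have h1 := Real.abs_log_sub_add_sum_range_le habs 6
  have h2 := Real.abs_log_sub_add_sum_range_le habs' 6
  rw [abs_neg] at h2
  rw [abs_of_pos h0] at h1 h2
  simp only [Finset.sum_range_succ, Finset.sum_range_zero] at h1 h2
  norm_num at h1 h2
  have h2n : |-t + t ^ 2 / 2 - t ^ 3 / 3 + t ^ 4 / 4 - t ^ 5 / 5 + t ^ 6 / 6 + Real.log (1 + t)| ≤ t ^ 7 / (1 - t) := by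
    convert h2 using 3; ring
  set E : ℝ := t^7/(1-t) with hEdef
  clear_value E
  have h1' := abs_le.1 h1
  have h2' := abs_le.1 h2n
  have hden : (0:ℝ) < 1 - t := by linarith
  have hE0 : 0 ≤ E := by rw [hEdef]; positivity
  have hE1 : E ≤ 3/2 * t^7 := by
    rw [hEdef, div_le_iff₀ hden]; nlinarith [pow_pos h0 7]
  have ht2 : t^2 ≤ 1/9 := by nlinarith
  have h7 : t^7 ≤ t^5 * (1/9) := by
    calc t^7 = t^5 * t^2 := by ring
    _ ≤ t^5 * (1/9) := mul_le_mul_of_nonneg_left ht2 (pow_nonneg h0.le 5)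
  have hlog : Real.log ((1+t)/(1-t)) = Real.log (1+t) - Real.log (1-t) :=
    Real.log_div (by positivity) (by positivity)
  have hden2 : (0:ℝ) < 1 - t^2 := by nlinarith
  constructor
  · rw [hlog]
    linarith [h1'.2, h2'.1, hE1, h7, pow_pos h0 5]
  · rw [hlog]
    have key : Real.log (1+t) - Real.log (1-t) ≤ 2*t + 2*t^3/3 + 2*t^5/5 + 2*E := by
      linarith [h1'.1, h2'.2]
    have hE2 : E * (1 - t^2) = t^7 * (1+t) := by
      rw [hEdef]; field_simp; ring
    have hprod : 0 ≤ t^5 * (4 - 24*t^2 - 30*t^3) := by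
      apply mul_nonneg (pow_nonneg h0.le 5); nlinarith
    have step : 2*t^3/3 + 2*t^5/5 + 2*E ≤ 2*t^3/(3*(1-t^2)) := by
      rw [le_div_iff₀ (by positivity)]
      have expand : (2*t^3/3 + 2*t^5/5 + 2*E) * (3*(1-t^2))
          = 2*t^3 - 4/5*t^5 + 24/5*t^7 + 6*t^8 := by linear_combination 6*hE2
      rw [expand]; linarith [hprod]
    linarith

noncomputable def dSeq (n : ℕ) : ℝ := Real.log (Nat.factorial n) - ((n:ℝ) + 1/2) * Real.log n + n

lemma dSeq_step {n : ℕ} (hn : 1 ≤ n) :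
    1/(12*(n:ℝ)+1) - 1/(12*((n:ℝ)+1)+1) < dSeq n - dSeq (n+1) ∧
    dSeq n - dSeq (n+1) ≤ 1/(12*(n:ℝ)) - 1/(12*((n:ℝ)+1)) := by
  have hx : (1:ℝ) ≤ (n:ℝ) := by exact_mod_cast hn
  set x : ℝ := (n:ℝ) with hxdef
  have hx0 : (0:ℝ) < x := by linarith
  have h0 : 0 < 1/(2*x+1) := by positivity
  have h3 : 1/(2*x+1) ≤ 1/3 := by
    rw [div_le_div_iff₀ (by linarith) (by norm_num)]; linarith
  obtain ⟨hl, hu⟩ := log_ratio_bounds h0 h3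
  set t : ℝ := 1/(2*x+1) with htdef
  have htne : (2*x+1) ≠ 0 := by positivity
  have ht1 : t < 1 := by rw [htdef, div_lt_one (by linarith)]; linarith
  have ht : (1+t)/(1-t) = (x+1)/x := by
    rw [htdef]; rw [div_eq_div_iff (by nlinarith [h0, ht1]) (ne_of_gt hx0)]; field_simp; ring
  rw [ht] at hl hu
  have hfacne : ((Nat.factorial n : ℕ) : ℝ) ≠ 0 := Nat.cast_ne_zero.2 (Nat.factorial_ne_zero n)
  have hstep : dSeq n - dSeq (n+1) = (x+1/2) * Real.log ((x+1)/x) - 1 := by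
    unfold dSeq
    have hfac : ((Nat.factorial (n+1) : ℕ) : ℝ) = (x+1) * ((Nat.factorial n : ℕ) : ℝ) := by
      push_cast [Nat.factorial_succ]; ring
    rw [hfac, Real.log_mul (by linarith) hfacne,
      Real.log_div (by linarith) (ne_of_gt hx0)]
    push_cast
    ring
  rw [hstep]
  constructor
  · have h1 := mul_lt_mul_of_pos_left hl (show (0:ℝ) < x + 1/2 by linarith)
    have e : (x+1/2) * (2*t + 2/3*t^3) = 1 + 1/(3*(2*x+1)^2) := by
      rw [htdef]; field_simp
    rw [e] at h1
    have c1 : 1/(12*x+1) - 1/(12*(x+1)+1) < 1/(3*(2*x+1)^2) := by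
      rw [div_sub_div _ _ (by linarith) (by linarith), div_lt_div_iff₀ (by nlinarith) (by positivity)]
      nlinarith
    linarith
  · have h1 := mul_le_mul_of_nonneg_left hu (show (0:ℝ) ≤ x + 1/2 by linarith)
    have e : (x+1/2) * (2*t + 2*t^3/(3*(1-t^2))) = 1 + 1/(12*x*(x+1)) := by
      rw [htdef]
      have h2 : 1 - (1/(2*x+1))^2 = (4*x^2+4*x)/(2*x+1)^2 := by field_simp; ring
      rw [h2]; field_simp; ring
    rw [e] at h1
    have c2 : 1/(12*x*(x+1)) = 1/(12*x) - 1/(12*(x+1)) := by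
      rw [div_sub_div _ _ (by positivity) (by positivity)]; rw [div_eq_div_iff (by positivity) (by positivity)]; ring
    linarith

lemma dSeq_tendsto : Tendsto dSeq atTop (𝓝 (Real.log (Real.sqrt (2*π)))) := by
  have h := Stirling.tendsto_stirlingSeq_sqrt_pi
  have hlim : Tendsto (fun n => Real.log (Real.sqrt 2 * Stirling.stirlingSeq n)) atTop
      (𝓝 (Real.log (Real.sqrt 2 * Real.sqrt π))) := by
    apply Real.continuousAt_log (by positivity) |>.tendsto.comp
    exact tendsto_const_nhds.mul h
  have heq : Real.sqrt 2 * Real.sqrt π = Real.sqrt (2*π) := (Real.sqrt_mul (by norm_num) π).symm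
  rw [heq] at hlim
  apply hlim.congr'
  filter_upwards [eventually_ge_atTop 1] with n hn
  have hx : (0:ℝ) < n := by exact_mod_cast hn
  have hsn : (0:ℝ) < Real.sqrt n := Real.sqrt_pos.2 hx
  have hpow : (0:ℝ) < ((n:ℝ)/Real.exp 1)^n := by positivity
  have hfac : (0:ℝ) < (Nat.factorial n : ℝ) := by exact_mod_cast (Nat.factorial_pos n)
  unfold Stirling.stirlingSeq dSeq
  rw [Real.sqrt_mul (by norm_num : (0:ℝ) ≤ 2)]
  have hs2 : (0:ℝ) < Real.sqrt 2 := by positivity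
  have hred : Real.sqrt 2 * ((Nat.factorial n : ℝ) / (Real.sqrt 2 * Real.sqrt n * ((n:ℝ)/Real.exp 1)^n))
      = (Nat.factorial n : ℝ) / (Real.sqrt n * ((n:ℝ)/Real.exp 1)^n) := by
    field_simp
  rw [hred, Real.log_div (ne_of_gt hfac) (by positivity),
    Real.log_mul (ne_of_gt hsn) (ne_of_gt hpow), Real.log_pow,
    Real.log_div (ne_of_gt hx) (ne_of_gt (Real.exp_pos 1)), Real.log_exp,
    Real.log_sqrt hx.le]
  ring

lemma dSeq_gt (n : ℕ) (hn : 1 ≤ n) :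
    Real.log (Real.sqrt (2*π)) + 1/(12*(n:ℝ)+1) < dSeq n := by
  set v : ℕ → ℝ := fun k => dSeq k - 1/(12*(k:ℝ)+1) with hv
  have hvstep : ∀ k, 1 ≤ k → v (k+1) < v k := by
    intro k hk
    have := (dSeq_step hk).1
    simp only [hv]
    push_cast
    linarith
  have hvmono : ∀ k l, 1 ≤ k → k ≤ l → v l ≤ v k := by
    intro k l hk hkl
    induction l with
    | zero => omega
    | succ m ih =>
      rcases Nat.lt_or_ge k (m+1) with h | h
      · have hm : k ≤ m := by omega
        have h1m : 1 ≤ m := by omega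
        exact le_trans (hvstep m h1m).le (ih hm)
      · have : k = m + 1 := by omega
        rw [this]
  have hvlim : Tendsto v atTop (𝓝 (Real.log (Real.sqrt (2*π)))) := by
    have h0 : Tendsto (fun k : ℕ => 1/(12*(k:ℝ)+1)) atTop (𝓝 0) := by
      simp only [one_div]
      apply Tendsto.comp tendsto_inv_atTop_zero
      apply tendsto_atTop_add_const_right
      exact (tendsto_natCast_atTop_atTop).const_mul_atTop (by norm_num)
    have h1 := dSeq_tendsto.sub h0
    rw [sub_zero] at h1
    apply h1.congr
    intro k; simp [hv, one_div]
  have hL : Real.log (Real.sqrt (2*π)) ≤ v (n+1) := by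
    apply le_of_tendsto hvlim
    filter_upwards [eventually_ge_atTop (n+1)] with l hl
    exact hvmono (n+1) l (by omega) hl
  have := hvstep n hn
  have hfin : Real.log (Real.sqrt (2*π)) < v n := lt_of_le_of_lt hL this
  simp only [hv] at hfin
  linarith

lemma dSeq_le (n : ℕ) (hn : 1 ≤ n) :
    dSeq n ≤ Real.log (Real.sqrt (2*π)) + 1/(12*(n:ℝ)) := by
  set u : ℕ → ℝ := fun k => dSeq k - 1/(12*(k:ℝ)) with hu
  have hustep : ∀ k, 1 ≤ k → u k ≤ u (k+1) := by
    intro k hk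
    have := (dSeq_step hk).2
    simp only [hu]
    push_cast
    linarith
  have humono : ∀ l, n ≤ l → u n ≤ u l := by
    intro l hl
    induction l with
    | zero => have : n = 0 := by omega
              rw [this]
    | succ m ih =>
      rcases Nat.lt_or_ge n (m+1) with h | h
      · have hm : n ≤ m := by omega
        exact le_trans (ih hm) (hustep m (by omega))
      · have : n = m + 1 := by omega
        rw [this]
  have hulim : Tendsto u atTop (𝓝 (Real.log (Real.sqrt (2*π)))) := by
    have h0 : Tendsto (fun k : ℕ => 1/(12*(k:ℝ))) atTop (𝓝 0) := by
      simp only [one_div]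
      apply Tendsto.comp tendsto_inv_atTop_zero
      exact (tendsto_natCast_atTop_atTop).const_mul_atTop (by norm_num)
    have h1 := dSeq_tendsto.sub h0
    rw [sub_zero] at h1
    apply h1.congr
    intro k; simp [hu, one_div]
  have : u n ≤ Real.log (Real.sqrt (2*π)) := by
    apply ge_of_tendsto hulim
    filter_upwards [eventually_ge_atTop n] with l hl
    exact humono l hl
  simp only [hu] at this
  linarith

lemma log_factorial_gt {n : ℕ} (hn : 1 ≤ n) :
    ((n:ℝ)+1/2)*Real.log n - n + Real.log (Real.sqrt (2*π)) + 1/(12*(n:ℝ)+1)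
      < Real.log (Nat.factorial n) := by
  have := dSeq_gt n hn; unfold dSeq at this; linarith

lemma log_factorial_le {n : ℕ} (hn : 1 ≤ n) :
    Real.log (Nat.factorial n)
      ≤ ((n:ℝ)+1/2)*Real.log n - n + Real.log (Real.sqrt (2*π)) + 1/(12*(n:ℝ)) := by
  have := dSeq_le n hn; unfold dSeq at this; linarith

set_option maxHeartbeats 1000000 in
/-- For integers `a ≥ 2` and `m ≥ 1`, the information-theoretic lower bound
for strictly monotonic sequences satisfies
`log₂ C(a·m, m) > m·((a−1)·log₂(a/(a−1)) + log₂ a)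
  + (1/2)·log₂(a/((a−1)·2·π·m)) + log₂(1 − (a²−a+1)/(12·a·(a−1)·m))`,
and the last factor `1 − (a²−a+1)/(12·a·(a−1)·m)` is strictly positive. -/
theorem log2_choose_monotonic_lower_bound (a m : ℕ) (ha : 2 ≤ a) (hm : 1 ≤ m) :
    (m : ℝ) * (((a : ℝ) - 1) * Real.logb 2 ((a : ℝ) / ((a : ℝ) - 1)) + Real.logb 2 (a : ℝ))
        + (1 / 2) * Real.logb 2 ((a : ℝ) / (((a : ℝ) - 1) * 2 * Real.pi * m))
        + Real.logb 2 (1 - ((a : ℝ) ^ 2 - a + 1) / (12 * a * ((a : ℝ) - 1) * m))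
      < Real.logb 2 ((a * m).choose m : ℝ) ∧
    0 < 1 - ((a : ℝ) ^ 2 - a + 1) / (12 * a * ((a : ℝ) - 1) * m) := by
  have hA : (2:ℝ) ≤ (a:ℝ) := by exact_mod_cast ha
  have hM : (1:ℝ) ≤ (m:ℝ) := by exact_mod_cast hm
  set A : ℝ := (a:ℝ) with hAdef
  set M : ℝ := (m:ℝ) with hMdef
  clear_value A M
  have hA0 : (0:ℝ) < A := by linarith
  have hA1 : (0:ℝ) < A - 1 := by linarith
  have hM0 : (0:ℝ) < M := by linarith
  have hpi := Real.pi_pos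
  -- epsilon and its positivity
  set ε : ℝ := (A^2 - A + 1)/(12*A*(A-1)*M) with hεdef
  clear_value ε
  have hden : (0:ℝ) < 12*A*(A-1)*M := by positivity
  have hεlb : 1/(12*M) < ε := by
    rw [hεdef, div_lt_div_iff₀ (by positivity) hden]
    nlinarith
  have hεub : ε ≤ 1/(8*M) := by
    rw [hεdef, div_le_div_iff₀ hden (by positivity)]
    nlinarith [mul_nonneg (mul_nonneg (by linarith : (0:ℝ) ≤ A - 2) (by linarith : (0:ℝ) ≤ A + 1)) hM0.le]
  have hpos : 0 < 1 - ε := by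
    have : ε ≤ 1/8 := le_trans hεub (by rw [div_le_div_iff₀ (by positivity) (by norm_num)]; linarith)
    linarith
  refine ⟨?_, hpos⟩
  -- the exponent x and bound log(1-ε) ≤ -x
  set x : ℝ := 1/(12*M) + 1/(12*((A-1)*M)) - 1/(12*(A*M)+1) with hxdef
  clear_value x
  have hAM0 : (0:ℝ) < A*M := by positivity
  have hA1M0 : (0:ℝ) < (A-1)*M := by positivity
  have hxε : x - ε = 1/((12*(A*M))*(12*(A*M)+1)) := by
    rw [hxdef, hεdef]; field_simp; ring
  have hxlb : 1/(12*M) < x := by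
    rw [hxdef]
    have : 1/(12*(A*M)+1) < 1/(12*((A-1)*M)) := by
      apply one_div_lt_one_div_of_lt (by positivity)
      nlinarith
    linarith
  have hxub : x ≤ 1/6 := by
    rw [hxdef]
    have h1 : 1/(12*M) ≤ 1/12 := by
      rw [div_le_div_iff₀ (by positivity) (by norm_num)]; linarith
    have h2 : 1/(12*((A-1)*M)) ≤ 1/12 := by
      rw [div_le_div_iff₀ (by positivity) (by norm_num)]; nlinarith
    have h3 : 0 < 1/(12*(A*M)+1) := by positivity
    linarith
  have hx0 : 0 < x := lt_trans (by positivity) hxlb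
  have hsq : x - ε ≤ x^2/4 := by
    have hq : 1/((12*(A*M))*(12*(A*M)+1)) ≤ 1/(576*M^2) := by
      apply one_div_le_one_div_of_le (by positivity)
      nlinarith [mul_nonneg (by nlinarith : (0:ℝ) ≤ A^2 - 4) (sq_nonneg M), hAM0]
    have hx2 : 1/(576*M^2) ≤ x^2/4 := by
      have h1 : (1/(12*M))^2 ≤ x^2 := by
        apply pow_le_pow_left₀ (by positivity) hxlb.le
      have h2 : (1/(12*M))^2 = 1/(144*M^2) := by field_simp; ring
      rw [h2] at h1
      calc 1/(576*M^2) = 1/(144*M^2)/4 := by ring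
      _ ≤ x^2/4 := by linarith
    linarith [hxε, hq, hx2]
  have hlogeps : Real.log (1 - ε) ≤ -x := by
    rw [Real.log_le_iff_le_exp hpos]
    have h1 : 1 - x/2 ≤ Real.exp (-(x/2)) := by
      have := Real.add_one_le_exp (-(x/2)); linarith
    have h1' : 0 ≤ 1 - x/2 := by linarith
    have h2 : (1-x/2)^2 ≤ (Real.exp (-(x/2)))^2 := pow_le_pow_left₀ h1' h1 2
    have h3 : (Real.exp (-(x/2)))^2 = Real.exp (-x) := by
      rw [sq, ← Real.exp_add]; ring_nf
    rw [h3] at h2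
    have h4 : 1-ε ≤ (1-x/2)^2 := by nlinarith [hsq]
    linarith [h2, h4]
  -- factorial bounds
  have ham : 1 ≤ a * m := Nat.one_le_iff_ne_zero.2 (Nat.mul_ne_zero (by omega) (by omega))
  have ha1m : 1 ≤ (a-1) * m := by
    have : 1 ≤ a - 1 := by omega
    exact Nat.one_le_iff_ne_zero.2 (Nat.mul_ne_zero (by omega) (by omega))
  have hcastam : ((a*m : ℕ) : ℝ) = A*M := by rw [hAdef, hMdef]; push_cast; ring
  have hcasta1m : (((a-1)*m : ℕ) : ℝ) = (A-1)*M := by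
    rw [hAdef, hMdef]; push_cast [Nat.cast_sub (by omega : 1 ≤ a)]; ring
  have hfAM := log_factorial_gt ham
  have hfM := log_factorial_le hm
  have hfA1M := log_factorial_le ha1m
  rw [hcastam] at hfAM
  rw [hcasta1m] at hfA1M
  -- choose identity
  have hmle : m ≤ a * m := Nat.le_mul_of_pos_left m (by omega)
  have hsub : a * m - m = (a-1) * m := by
    rw [Nat.sub_one_mul]
  have hchoose : (((a*m).choose m : ℕ) : ℝ)
      = (Nat.factorial (a*m) : ℝ) / ((Nat.factorial m : ℝ) * (Nat.factorial ((a-1)*m) : ℝ)) := by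
    rw [Nat.cast_choose ℝ hmle, hsub]
  have hfacpos : ∀ k : ℕ, (0:ℝ) < (Nat.factorial k : ℝ) := fun k => by
    exact_mod_cast Nat.factorial_pos k
  have hlogchoose : Real.log (((a*m).choose m : ℕ) : ℝ)
      = Real.log (Nat.factorial (a*m)) - Real.log (Nat.factorial m)
        - Real.log (Nat.factorial ((a-1)*m)) := by
    rw [hchoose, Real.log_div (ne_of_gt (hfacpos _)) (by positivity),
      Real.log_mul (ne_of_gt (hfacpos _)) (ne_of_gt (hfacpos _))]
    ring
  -- log expansions
  have hlogAM : Real.log (A*M) = Real.log A + Real.log M :=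
    Real.log_mul (ne_of_gt hA0) (ne_of_gt hM0)
  have hlogA1M : Real.log ((A-1)*M) = Real.log (A-1) + Real.log M :=
    Real.log_mul (ne_of_gt hA1) (ne_of_gt hM0)
  have hlogdiv1 : Real.log (A/(A-1)) = Real.log A - Real.log (A-1) :=
    Real.log_div (ne_of_gt hA0) (ne_of_gt hA1)
  have hlogdiv2 : Real.log (A/((A-1)*2*π*M))
      = Real.log A - (Real.log (A-1) + Real.log 2 + Real.log π + Real.log M) := by
    rw [Real.log_div (ne_of_gt hA0) (by positivity),
      Real.log_mul (by positivity) (ne_of_gt hM0),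
      Real.log_mul (by positivity) (ne_of_gt hpi),
      Real.log_mul (ne_of_gt hA1) (by norm_num)]
  have hc : Real.log (Real.sqrt (2*π)) = (Real.log 2 + Real.log π)/2 := by
    rw [Real.log_sqrt (by positivity), Real.log_mul (by norm_num) (ne_of_gt hpi)]
  rw [hlogAM] at hfAM
  rw [← hMdef] at hfM
  rw [hlogA1M] at hfA1M
  rw [hc] at hfAM hfM hfA1M
  -- natural-log main inequality
  have main : M*((A-1)*(Real.log (A/(A-1))) + Real.log A)
      + (1/2)*(Real.log (A/((A-1)*2*π*M))) + Real.log (1-ε)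
      < Real.log (((a*m).choose m : ℕ) : ℝ) := by
    rw [hlogchoose, hlogdiv1, hlogdiv2]
    have hxexp : -x = 1/(12*(A*M)+1) - 1/(12*M) - 1/(12*((A-1)*M)) := by
      rw [hxdef]; ring
    rw [hxexp] at hlogeps
    nlinarith [hfAM, hfM, hfA1M, hlogeps]
  -- convert to logb
  have hlog2 : (0:ℝ) < Real.log 2 := Real.log_pos (by norm_num)
  have hgoal : M * ((A - 1) * Real.logb 2 (A / (A - 1)) + Real.logb 2 A)
        + (1 / 2) * Real.logb 2 (A / ((A - 1) * 2 * π * M))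
        + Real.logb 2 (1 - ε)
      = (M*((A-1)*(Real.log (A/(A-1))) + Real.log A)
        + (1/2)*(Real.log (A/((A-1)*2*π*M))) + Real.log (1-ε)) / Real.log 2 := by
    simp only [Real.logb]; ring
  have hgoal2 : Real.logb 2 (((a*m).choose m : ℕ) : ℝ)
      = Real.log (((a*m).choose m : ℕ) : ℝ) / Real.log 2 := rfl
  rw [hgoal, hgoal2]
  exact (div_lt_div_iff_of_pos_right hlog2).mpr main
end
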